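/- arXiv:2202.09023 — 2 statements merged into one kernel-verified Lean document; each statement's English description precedes it below -/
import Mathlib

section
/- Max Shift is consistent: for every mode x⋆ of f and every point x₀ in the basin of attraction of x⋆, there exists ε₀ > 0 such that for every 0 < ε ≤ ε₀, every Max Shift sequence with parameter ε started at x₀ is eventually constant equal to x⋆. -/
open Metric Set Filter MeasureTheory Topology
open scoped Topology RealInnerProductSpace

abbrev Euc (d : ℕ) := EuclideanSpace ℝ (Fin d)

/-- The Hessian of `f`, as the derivative of the gradient field. -/
noncomputable def hess {d : ℕ} (f : Euc d → ℝ) (x : Euc d) : Euc d →L[ℝ] Euc d :=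
  fderiv ℝ (gradient f) x

/-- The standing assumptions on the density `f`: nonnegative, integrable, vanishing at
infinity, twice differentiable with bounded and uniformly continuous zeroth, first and
second derivatives, and Morse (nonsingular Hessian at every critical point). -/
def IsNiceDensity {d : ℕ} (f : Euc d → ℝ) : Prop :=
  (∀ x, 0 ≤ f x) ∧
  Integrable f volume ∧
  Tendsto f (cocompact (Euc d)) (𝓝 0) ∧
  Differentiable ℝ f ∧
  Differentiable ℝ (gradient f) ∧
  (∃ M, ∀ x, |f x| ≤ M) ∧
  (∃ M, ∀ x, ‖gradient f x‖ ≤ M) ∧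
  (∃ M, ∀ x, ‖hess f x‖ ≤ M) ∧
  UniformContinuous f ∧
  UniformContinuous (gradient f) ∧
  UniformContinuous (hess f) ∧
  (∀ x, gradient f x = 0 → Function.Bijective (hess f x))

/-- `γ` is the gradient ascent curve of `f` starting at `x`, defined on `[0, ∞)`. -/
def IsGradFlow {d : ℕ} (f : Euc d → ℝ) (x : Euc d) (γ : ℝ → Euc d) : Prop :=
  γ 0 = x ∧ ∀ t ∈ Ici (0:ℝ), HasDerivWithinAt γ (gradient f (γ t)) (Ici 0) t

/-- A Max Shift sequence with parameter `ε` started at `x₀`: each point maximizes `f` over the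
closed ball of radius `ε` around the previous point, and the sequence becomes constant as soon
as the density value stops strictly increasing. -/
def IsMaxShiftSeq {d : ℕ} (f : Euc d → ℝ) (ε : ℝ) (x₀ : Euc d) (x : ℕ → Euc d) : Prop :=
  x 0 = x₀ ∧ ∀ k : ℕ,
    x (k+1) ∈ closedBall (x k) ε ∧
    (∀ y ∈ closedBall (x k) ε, f y ≤ f (x (k+1))) ∧
    (f (x (k+1)) = f (x k) → ∀ m, k + 1 ≤ m → x m = x (k+1))

section MaxShiftProof
variable {d : ℕ} {f : Euc d → ℝ} {γ : ℝ → Euc d}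

lemma hasDerivAt_line (hdiff : Differentiable ℝ f) (x v : Euc d) (t : ℝ) :
    HasDerivAt (fun s : ℝ => f (x + s • v)) ⟪gradient f (x + t • v), v⟫ t := by
  have hc : HasDerivAt (fun s : ℝ => x + s • v) v t := by
    simpa using ((hasDerivAt_id t).smul_const v).const_add x
  have h := (hdiff (x + t • v)).hasGradientAt.hasFDerivAt.comp_hasDerivAt t hc
  exact h

lemma hasDerivAt_grad_line (hgrad : Differentiable ℝ (gradient f)) (x v w : Euc d) (t : ℝ) :
    HasDerivAt (fun s : ℝ => ⟪gradient f (x + s • v), w⟫)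
      ⟪(hess f (x + t • v)) v, w⟫ t := by
  have hc : HasDerivAt (fun s : ℝ => x + s • v) v t := by
    simpa using ((hasDerivAt_id t).smul_const v).const_add x
  have h := ((hgrad (x + t • v)).hasFDerivAt.comp_hasDerivAt t hc)
  have h2 : HasDerivAt (fun s : ℝ => gradient f (x + s • v)) ((hess f (x + t • v)) v) t := h
  simpa using (h2.inner ℝ (hasDerivAt_const t w))

lemma grad_lipschitz (hgrad : Differentiable ℝ (gradient f)) {L : ℝ}
    (hb : ∀ x, ‖hess f x‖ ≤ L) (x y : Euc d) :
    ‖gradient f y - gradient f x‖ ≤ L * ‖y - x‖ := by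
  have hL : 0 ≤ L := le_trans (norm_nonneg _) (hb x)
  have hlip : LipschitzWith L.toNNReal (gradient f) := by
    apply lipschitzWith_of_nnnorm_fderiv_le hgrad
    intro z
    have : ‖fderiv ℝ (gradient f) z‖ ≤ L := hb z
    rw [← NNReal.coe_le_coe, coe_nnnorm, Real.coe_toNNReal _ hL]
    exact this
  have := hlip.dist_le_mul y x
  rwa [dist_eq_norm, dist_eq_norm, Real.coe_toNNReal _ hL] at this

lemma taylor_bound (hdiff : Differentiable ℝ f) (hgrad : Differentiable ℝ (gradient f))
    {L : ℝ} (hb : ∀ x, ‖hess f x‖ ≤ L) (x y : Euc d) :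
    |f y - f x - ⟪gradient f x, y - x⟫| ≤ L * ‖y - x‖ ^ 2 := by
  have hL : 0 ≤ L := le_trans (norm_nonneg _) (hb x)
  set v := y - x with hv
  set φ : ℝ → ℝ := fun t => f (x + t • v) - t * ⟪gradient f x, v⟫ with hφ
  have hder : ∀ t : ℝ, HasDerivAt φ ⟪gradient f (x + t • v) - gradient f x, v⟫ t := by
    intro t
    have h1 := (hasDerivAt_line hdiff x v t).sub
      ((hasDerivAt_id t).mul_const (⟪gradient f x, v⟫ : ℝ))
    have h2 : HasDerivAt φ (⟪gradient f (x + t • v), v⟫ - 1 * ⟪gradient f x, v⟫) t := h1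
    simpa only [one_mul, ← inner_sub_left] using h2
  have hbound : ∀ t ∈ Ico (0:ℝ) 1, ‖⟪gradient f (x + t • v) - gradient f x, v⟫‖ ≤ L * ‖v‖ ^ 2 := by
    intro t ht
    calc ‖⟪gradient f (x + t • v) - gradient f x, v⟫‖
        ≤ ‖gradient f (x + t • v) - gradient f x‖ * ‖v‖ := norm_inner_le_norm _ _
      _ ≤ (L * ‖(x + t • v) - x‖) * ‖v‖ := by
          gcongr; exact grad_lipschitz hgrad hb x (x + t • v)
      _ = L * (t * ‖v‖) * ‖v‖ := by
          rw [add_sub_cancel_left, norm_smul, Real.norm_eq_abs, abs_of_nonneg ht.1]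
      _ ≤ L * (1 * ‖v‖) * ‖v‖ := by gcongr; exact ht.2.le
      _ = L * ‖v‖ ^ 2 := by ring
  have := norm_image_sub_le_of_norm_deriv_le_segment_01'
    (fun t _ => (hder t).hasDerivWithinAt) hbound
  have h0 : φ 0 = f x := by
    simp only [hφ, zero_smul, add_zero, zero_mul, sub_zero]
  have h1 : φ 1 = f y - ⟪gradient f x, y - x⟫ := by
    simp only [hφ, one_smul, one_mul, hv, add_sub_cancel]
  rw [h0, h1] at this
  rw [Real.norm_eq_abs, sub_right_comm] at this
  exact this

/-- Monotone gradient inequality on a ball where the Hessian quadratic form is `≤ -a`. -/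
lemma inner_grad_sub_le (hgrad : Differentiable ℝ (gradient f)) {a r : ℝ} (xs : Euc d)
    (hneg : ∀ z ∈ closedBall xs r, ∀ v : Euc d, ⟪hess f z v, v⟫ ≤ -a * ‖v‖ ^ 2)
    {z w : Euc d} (hz : z ∈ closedBall xs r) (hw : w ∈ closedBall xs r) :
    ⟪gradient f z - gradient f w, z - w⟫ ≤ -a * ‖z - w‖ ^ 2 := by
  set u := z - w with hu
  set χ : ℝ → ℝ := fun t => ⟪gradient f (w + t • u), u⟫ + a * t * ‖u‖ ^ 2 with hχ
  have hder : ∀ t : ℝ, HasDerivAt χ (⟪hess f (w + t • u) u, u⟫ + a * ‖u‖ ^ 2) t := by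
    intro t
    have h1 := (hasDerivAt_grad_line hgrad w u u t).add
      (((hasDerivAt_id t).const_mul a).mul_const (‖u‖ ^ 2))
    have h2 : HasDerivAt χ (⟪hess f (w + t • u) u, u⟫ + a * 1 * ‖u‖ ^ 2) t := h1
    simpa only [mul_one] using h2
  have hmem : ∀ t ∈ Icc (0:ℝ) 1, w + t • u ∈ closedBall xs r := fun t ht =>
    (convex_closedBall xs r).add_smul_sub_mem hw hz ht
  have hmono : AntitoneOn χ (Icc (0:ℝ) 1) := by
    apply antitoneOn_of_deriv_nonpos (convex_Icc 0 1)
    · exact (Differentiable.continuous fun t => (hder t).differentiableAt).continuousOn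
    · exact fun t _ => (hder t).differentiableAt.differentiableWithinAt
    · intro t ht
      rw [(hder t).deriv]
      rw [interior_Icc] at ht
      have := hneg _ (hmem t ⟨ht.1.le, ht.2.le⟩) u
      linarith
  have h01 := hmono (left_mem_Icc.2 zero_le_one) (right_mem_Icc.2 zero_le_one) zero_le_one
  have e0 : χ 0 = ⟪gradient f w, u⟫ := by simp [hχ]
  have e1 : χ 1 = ⟪gradient f z, u⟫ + a * ‖u‖ ^ 2 := by simp [hχ, hu]
  rw [e0, e1] at h01
  rw [inner_sub_left]
  linarith
lemma grad_localMax_eq_zero (hdiff : Differentiable ℝ f) {xs : Euc d}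
    (hmax : IsLocalMax f xs) : gradient f xs = 0 := by
  have h0 : fderiv ℝ f xs = 0 := hmax.fderiv_eq_zero
  have e := ((hdiff xs).hasGradientAt.hasFDerivAt).fderiv
  rw [h0] at e
  apply (InnerProductSpace.toDual ℝ (Euc d)).injective
  rw [← e, map_zero]

lemma hess_symm (hdiff : Differentiable ℝ f) (hgrad : Differentiable ℝ (gradient f))
    (x : Euc d) (v w : Euc d) : ⟪hess f x v, w⟫ = ⟪hess f x w, v⟫ := by
  set ι : Euc d →L[ℝ] StrongDual ℝ (Euc d) :=
    (InnerProductSpace.toDual ℝ (Euc d)).toContinuousLinearEquiv.toContinuousLinearMap with hι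
  have hf' : ∀ y, HasFDerivAt f (ι (gradient f y)) y := by
    intro y
    have := (hdiff y).hasGradientAt.hasFDerivAt
    exact this
  have hx : HasFDerivAt (fun y => ι (gradient f y)) (ι.comp (hess f x)) x :=
    (ι.hasFDerivAt).comp x (hgrad x).hasFDerivAt
  have hsymm := second_derivative_symmetric hf' hx v w
  have e1 : ∀ (u z : Euc d), (ι.comp (hess f x)) u z = ⟪hess f x u, z⟫ := by
    intro u z
    simp [hι, InnerProductSpace.toDual_apply_apply]
  rw [e1, e1] at hsymm
  exact hsymm

lemma second_order_nonpos (hdiff : Differentiable ℝ f) (hgrad : Differentiable ℝ (gradient f))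
    {xs : Euc d} (hmax : IsLocalMax f xs) (v : Euc d) : ⟪hess f xs v, v⟫ ≤ 0 := by
  by_contra hpos
  push_neg at hpos
  set b := ⟪hess f xs v, v⟫ with hb
  -- ψ s = ⟪gradient f (xs + s • v), v⟫ has derivative b at 0 and ψ 0 = 0
  have hg0 : gradient f xs = 0 := grad_localMax_eq_zero hdiff hmax
  have hψ : HasDerivAt (fun s : ℝ => ⟪gradient f (xs + s • v), v⟫) b 0 := by
    have := hasDerivAt_grad_line hgrad xs v v 0
    simpa [hb] using this
  have hψ0 : ⟪gradient f (xs + (0:ℝ) • v), v⟫ = 0 := by simp [hg0]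
  -- littleO: eventually ψ s ≥ (b/2) s for s ≥ 0 small
  have hlo := hψ.isLittleO.def (by linarith : (0:ℝ) < b/2)
  rw [Metric.eventually_nhds_iff] at hlo
  obtain ⟨δ, hδpos, hδ⟩ := hlo
  -- local max ball
  obtain ⟨ρ, hρpos, hρ⟩ := Metric.eventually_nhds_iff.1 hmax
  -- choose t0 > 0 small
  have hvnorm : (0:ℝ) < ‖v‖ := by
    rcases eq_or_ne v 0 with h | h
    · rw [h] at hb; simp at hb; linarith
    · exact norm_pos_iff.2 h
  set t0 : ℝ := min (δ/2) (ρ / (2 * ‖v‖)) with ht0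
  have ht0pos : 0 < t0 := lt_min (by linarith) (by positivity)
  -- φ strictly increasing on [0, t0]
  have hφd : ∀ s : ℝ, HasDerivAt (fun u : ℝ => f (xs + u • v)) ⟪gradient f (xs + s • v), v⟫ s :=
    fun s => hasDerivAt_line hdiff xs v s
  have hψpos : ∀ s ∈ Ioo (0:ℝ) t0, 0 < ⟪gradient f (xs + s • v), v⟫ := by
    intro s hs
    have hsd : dist s 0 < δ := by
      rw [Real.dist_eq, sub_zero, abs_of_pos hs.1]
      calc s < t0 := hs.2
        _ ≤ δ/2 := min_le_left _ _
        _ < δ := by linarith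
    have := hδ hsd
    simp only [hψ0, sub_zero, smul_eq_mul, Real.norm_eq_abs] at this
    have habs : |⟪gradient f (xs + s • v), v⟫ - s * b| ≤ b/2 * |s| := by
      simpa [Real.norm_eq_abs] using this
    rw [abs_of_pos hs.1] at habs
    have := abs_le.1 habs
    nlinarith [hs.1]
  have hmono : StrictMonoOn (fun u : ℝ => f (xs + u • v)) (Icc 0 t0) := by
    apply strictMonoOn_of_deriv_pos (convex_Icc 0 t0)
    · exact (Differentiable.continuous fun s => (hφd s).differentiableAt).continuousOn
    · intro s hs
      rw [interior_Icc] at hs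
      rw [(hφd s).deriv]
      exact hψpos s hs
  have hlt := hmono (left_mem_Icc.2 ht0pos.le) (right_mem_Icc.2 ht0pos.le) ht0pos
  simp only [zero_smul, add_zero] at hlt
  -- but xs + t0 • v is within the local-max ball
  have hmem : dist (xs + t0 • v) xs < ρ := by
    rw [dist_eq_norm, add_sub_cancel_left, norm_smul, Real.norm_eq_abs, abs_of_pos ht0pos]
    calc t0 * ‖v‖ ≤ ρ / (2 * ‖v‖) * ‖v‖ := by
          have := min_le_right (δ/2) (ρ / (2 * ‖v‖)); gcongr
      _ = ρ / 2 := by field_simp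
      _ < ρ := by linarith
  exact absurd (hρ hmem) (not_le.2 hlt)

lemma neg_definite_at_max (hd : 0 < d) (hdiff : Differentiable ℝ f)
    (hgrad : Differentiable ℝ (gradient f)) {xs : Euc d} (hmax : IsLocalMax f xs)
    (hinj : Function.Injective (hess f xs)) :
    ∃ a : ℝ, 0 < a ∧ ∀ v : Euc d, ⟪hess f xs v, v⟫ ≤ -(2*a) * ‖v‖ ^ 2 := by
  have hnonpos := second_order_nonpos hdiff hgrad hmax
  have hsymm := hess_symm hdiff hgrad xs
  -- sphere is nonempty and compact
  have hsph : (sphere (0 : Euc d) 1).Nonempty := by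
    refine ⟨EuclideanSpace.single ⟨0, hd⟩ 1, ?_⟩
    simp [EuclideanSpace.norm_single]
  have hcpt : IsCompact (sphere (0 : Euc d) 1) := isCompact_sphere 0 1
  have hcont : Continuous (fun v : Euc d => ⟪hess f xs v, v⟫) :=
    Continuous.inner ((hess f xs).continuous) continuous_id
  obtain ⟨v₀, hv₀mem, hv₀max'⟩ := hcpt.exists_isMaxOn hsph hcont.continuousOn
  have hv₀max : ∀ w ∈ sphere (0 : Euc d) 1, ⟪hess f xs w, w⟫ ≤ ⟪hess f xs v₀, v₀⟫ :=
    fun w hw => hv₀max' hw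
  have hv₀norm : ‖v₀‖ = 1 := by simpa using hv₀mem
  have hv₀neg : ⟪hess f xs v₀, v₀⟫ < 0 := by
    rcases lt_or_eq_of_le (hnonpos v₀) with h | h
    · exact h
    · exfalso
      -- then hess f xs v₀ = 0
      have hzero : ∀ w : Euc d, ⟪hess f xs v₀, w⟫ = 0 := by
        intro w
        set c := ⟪hess f xs v₀, w⟫ with hc
        set q := ⟪hess f xs w, w⟫ with hq
        have hqle : q ≤ 0 := hnonpos w
        set t : ℝ := c / (1 - q) with ht
        have hexp := hnonpos (v₀ + t • w)
        have expand : ⟪hess f xs (v₀ + t • w), v₀ + t • w⟫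
            = ⟪hess f xs v₀, v₀⟫ + 2*t*c + t^2*q := by
          rw [(hess f xs).map_add, (hess f xs).map_smul]
          rw [inner_add_left, inner_add_right, inner_add_right]
          rw [real_inner_smul_left, real_inner_smul_left, real_inner_smul_right,
            real_inner_smul_right]
          rw [hsymm w v₀]
          rw [← hc, ← hq]
          ring
        rw [expand, h] at hexp
        have h1q : (0:ℝ) < 1 - q := by linarith
        have hexp' : 2*t*c + t^2*q ≤ 0 := by linarith
        have key : (1-q)^2 * (2*t*c + t^2*q) = c^2 * (2-q) := by
          rw [ht]
          field_simp
          ring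
        have h2 : c^2 * (2 - q) ≤ 0 := by
          rw [← key]
          exact mul_nonpos_of_nonneg_of_nonpos (sq_nonneg _) hexp'
        have hc0 : c = 0 := by nlinarith [sq_nonneg c]
        rw [hc]at hc0
        exact hc0
      have hv0 : hess f xs v₀ = 0 := by
        have := hzero (hess f xs v₀)
        exact inner_self_eq_zero.1 this
      have : v₀ = 0 := by
        apply hinj
        rw [hv0, map_zero]
      rw [this] at hv₀norm
      simp at hv₀norm
  refine ⟨-⟪hess f xs v₀, v₀⟫ / 2, by linarith, ?_⟩
  intro v
  rcases eq_or_ne v 0 with h | h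
  · simp [h]
  · have hvn : (0:ℝ) < ‖v‖ := norm_pos_iff.2 h
    have hmem : (‖v‖⁻¹ • v) ∈ sphere (0 : Euc d) 1 := by
      simp [norm_smul, abs_of_pos (inv_pos.2 hvn), inv_mul_cancel₀ (ne_of_gt hvn)]
    have := hv₀max _ hmem
    have hscale : ⟪hess f xs (‖v‖⁻¹ • v), ‖v‖⁻¹ • v⟫ = ‖v‖⁻¹^2 * ⟪hess f xs v, v⟫ := by
      rw [(hess f xs).map_smul, real_inner_smul_left, real_inner_smul_right]
      ring
    rw [hscale] at this
    calc ⟪hess f xs v, v⟫ = ‖v‖^2 * (‖v‖⁻¹^2 * ⟪hess f xs v, v⟫) := by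
          field_simp
      _ ≤ ‖v‖^2 * ⟪hess f xs v₀, v₀⟫ := mul_le_mul_of_nonneg_left this (sq_nonneg _)
      _ = -(2 * (-⟪hess f xs v₀, v₀⟫ / 2)) * ‖v‖^2 := by ring

/-- Quadratic upper bound near the nondegenerate max. -/
lemma quad_upper (hdiff : Differentiable ℝ f) (hgrad : Differentiable ℝ (gradient f))
    {a r : ℝ} {xs : Euc d} (ha : 0 < a)
    (hneg : ∀ z ∈ closedBall xs r, ∀ v : Euc d, ⟪hess f z v, v⟫ ≤ -a * ‖v‖ ^ 2)
    (hg0 : gradient f xs = 0) {y : Euc d} (hy : y ∈ closedBall xs r) :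
    f y ≤ f xs - a/2 * ‖y - xs‖ ^ 2 := by
  have hr0 : 0 ≤ r := le_trans dist_nonneg hy
  set u := y - xs with hu
  set w : ℝ → ℝ := fun t => f (xs + t • u) + a * t^2 / 2 * ‖u‖^2 with hwdef
  have hder : ∀ t : ℝ, HasDerivAt w (⟪gradient f (xs + t • u), u⟫ + a * t * ‖u‖^2) t := by
    intro t
    have h2 : HasDerivAt (fun t : ℝ => a * t^2/2 * ‖u‖^2) (a * t * ‖u‖^2) t := by
      have := (((hasDerivAt_pow 2 t).const_mul a).div_const 2).mul_const (‖u‖^2)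
      exact this.congr_deriv (by ring)
    exact (hasDerivAt_line hdiff xs u t).add h2
  have hmem : ∀ t ∈ Icc (0:ℝ) 1, xs + t • u ∈ closedBall xs r := fun t ht =>
    (convex_closedBall xs r).add_smul_sub_mem (mem_closedBall_self hr0) hy ht
  have hanti : AntitoneOn w (Icc (0:ℝ) 1) := by
    apply antitoneOn_of_deriv_nonpos (convex_Icc 0 1)
    · exact (Differentiable.continuous fun t => (hder t).differentiableAt).continuousOn
    · exact fun t _ => (hder t).differentiableAt.differentiableWithinAt
    · intro t ht
      rw [interior_Icc] at ht
      rw [(hder t).deriv]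
      set z := xs + t • u with hz
      have hkey := inner_grad_sub_le hgrad xs hneg (hmem t ⟨ht.1.le, ht.2.le⟩)
        (mem_closedBall_self hr0)
      rw [hg0, sub_zero] at hkey
      have hzx : z - xs = t • u := by rw [hz]; abel
      rw [hzx, real_inner_smul_right, norm_smul, Real.norm_eq_abs, abs_of_pos ht.1] at hkey
      have hkey2 : t * (⟪gradient f z, u⟫ + a * t * ‖u‖^2) ≤ t * 0 := by nlinarith [hkey]
      exact le_of_mul_le_mul_left hkey2 ht.1
  have h01 := hanti (left_mem_Icc.2 zero_le_one) (right_mem_Icc.2 zero_le_one) zero_le_one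
  have e0 : w 0 = f xs := by
    simp only [hwdef, zero_smul, add_zero]
    norm_num
  have e1 : w 1 = f y + a/2 * ‖y - xs‖^2 := by
    simp only [hwdef, one_smul, hu, add_sub_cancel]
    norm_num
  rw [e0, e1] at h01
  linarith

/-- Concavity along the segment towards the max. -/
lemma segment_concave_lower (hdiff : Differentiable ℝ f) (hgrad : Differentiable ℝ (gradient f))
    {a r : ℝ} {xs : Euc d} (ha : 0 < a)
    (hneg : ∀ z ∈ closedBall xs r, ∀ v : Euc d, ⟪hess f z v, v⟫ ≤ -a * ‖v‖ ^ 2)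
    {x : Euc d} (hx : x ∈ closedBall xs r) {θ : ℝ} (hθ0 : 0 ≤ θ) (hθ1 : θ ≤ 1) :
    f x + θ * (f xs - f x) ≤ f (x + θ • (xs - x)) := by
  have hr0 : 0 ≤ r := le_trans dist_nonneg hx
  set φ : ℝ → ℝ := fun s => f (x + s • (xs - x)) with hφ
  have hder : ∀ s : ℝ, HasDerivAt φ ⟪gradient f (x + s • (xs - x)), xs - x⟫ s :=
    fun s => hasDerivAt_line hdiff x (xs - x) s
  have hmem : ∀ s ∈ Icc (0:ℝ) 1, x + s • (xs - x) ∈ closedBall xs r := fun s hs =>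
    (convex_closedBall xs r).add_smul_sub_mem hx (mem_closedBall_self hr0) hs
  have hconc : ConcaveOn ℝ (Icc (0:ℝ) 1) φ := by
    apply AntitoneOn.concaveOn_of_deriv (convex_Icc 0 1)
    · exact (Differentiable.continuous fun s => (hder s).differentiableAt).continuousOn
    · exact fun s _ => (hder s).differentiableAt.differentiableWithinAt
    · intro s1 hs1 s2 hs2 h12
      rw [interior_Icc] at hs1 hs2
      rw [(hder s1).deriv, (hder s2).deriv]
      rcases eq_or_lt_of_le h12 with rfl | hlt
      · exact le_refl _
      · set z1 := x + s1 • (xs - x) with hz1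
        set z2 := x + s2 • (xs - x) with hz2
        have hkey := inner_grad_sub_le hgrad xs hneg
          (hmem s2 ⟨hs2.1.le, hs2.2.le⟩) (hmem s1 ⟨hs1.1.le, hs1.2.le⟩)
        have hdiffz : z2 - z1 = (s2 - s1) • (xs - x) := by
          rw [hz1, hz2]
          rw [add_sub_add_left_eq_sub, ← sub_smul]
        rw [hdiffz, real_inner_smul_right, inner_sub_left] at hkey
        have hpos : 0 < s2 - s1 := by linarith
        have hnn : -a * ‖(s2 - s1) • (xs - x)‖^2 ≤ 0 := by
          have : 0 ≤ ‖(s2 - s1) • (xs - x)‖^2 := by positivity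
          nlinarith
        have := le_trans hkey hnn
        have h2 : (s2 - s1) * (⟪gradient f z2, xs - x⟫ - ⟪gradient f z1, xs - x⟫)
            ≤ (s2 - s1) * 0 := by rw [mul_zero]; exact this
        have := le_of_mul_le_mul_left h2 hpos
        linarith
  have happ := hconc.2 (left_mem_Icc.2 zero_le_one) (right_mem_Icc.2 zero_le_one)
    (by linarith : (0:ℝ) ≤ 1 - θ) hθ0 (by ring)
  have e0 : φ ((1-θ) • (0:ℝ) + θ • (1:ℝ)) = f (x + θ • (xs - x)) := by
    rw [hφ]
    norm_num
  have e1 : φ 0 = f x := by simp only [hφ, zero_smul, add_zero]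
  have e2 : φ 1 = f xs := by simp only [hφ, one_smul, add_sub_cancel]
  rw [e0] at happ
  rw [e1, e2] at happ
  simp only [smul_eq_mul] at happ
  linarith
lemma sq_le_imp {a b : ℝ} (ha : 0 ≤ a) (hb : 0 ≤ b) (h : a^2 ≤ b^2) : a ≤ b := by
  nlinarith [sq_nonneg (a - b), sq_nonneg (a + b)]

lemma unit_diff_le {E : Type*} [NormedAddCommGroup E] [InnerProductSpace ℝ E]
    {x y : E} (hx : x ≠ 0) (hy : y ≠ 0) :
    ‖‖x‖⁻¹ • x - ‖y‖⁻¹ • y‖ ≤ 2 * ‖x - y‖ / ‖y‖ := by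
  have hxn : (0:ℝ) < ‖x‖ := norm_pos_iff.2 hx
  have hyn : (0:ℝ) < ‖y‖ := norm_pos_iff.2 hy
  have key : ‖x‖⁻¹ • x - ‖y‖⁻¹ • y = ‖y‖⁻¹ • (x - y) + (‖x‖⁻¹ - ‖y‖⁻¹) • x := by
    rw [smul_sub, sub_smul]
    abel
  rw [key]
  calc ‖‖y‖⁻¹ • (x - y) + (‖x‖⁻¹ - ‖y‖⁻¹) • x‖
      ≤ ‖‖y‖⁻¹ • (x - y)‖ + ‖(‖x‖⁻¹ - ‖y‖⁻¹) • x‖ := norm_add_le _ _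
    _ = ‖y‖⁻¹ * ‖x - y‖ + |‖x‖⁻¹ - ‖y‖⁻¹| * ‖x‖ := by
        rw [norm_smul, norm_smul, Real.norm_eq_abs, Real.norm_eq_abs,
          abs_of_pos (inv_pos.2 hyn)]
    _ ≤ ‖y‖⁻¹ * ‖x - y‖ + (‖x - y‖ / (‖x‖ * ‖y‖)) * ‖x‖ := by
        have habs : |‖y‖ - ‖x‖| ≤ ‖x - y‖ :=
          (abs_norm_sub_norm_le y x).trans (le_of_eq (norm_sub_rev y x))
        have he : ‖x‖⁻¹ - ‖y‖⁻¹ = (‖y‖ - ‖x‖) / (‖x‖ * ‖y‖) := by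
          field_simp
        gcongr ‖y‖⁻¹ * ‖x - y‖ + ?_ * ‖x‖
        rw [he, abs_div, abs_of_pos (mul_pos hxn hyn)]
        gcongr
    _ = 2 * ‖x - y‖ / ‖y‖ := by
        field_simp
        ring

lemma flow_continuousOn (hγ : ∀ t ∈ Ici (0:ℝ), HasDerivWithinAt γ (gradient f (γ t)) (Ici 0) t) :
    ContinuousOn γ (Ici 0) := fun t ht => (hγ t ht).continuousWithinAt

lemma flow_dist_le {G : ℝ}
    (hγ : ∀ t ∈ Ici (0:ℝ), HasDerivWithinAt γ (gradient f (γ t)) (Ici 0) t)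
    (hG : ∀ z, ‖gradient f z‖ ≤ G) {s t : ℝ} (hs : 0 ≤ s) (hst : s ≤ t) :
    ‖γ t - γ s‖ ≤ G * (t - s) := by
  have hder : ∀ u ∈ Icc s t, HasDerivWithinAt γ (gradient f (γ u)) (Icc s t) u := by
    intro u hu
    exact (hγ u (le_trans hs hu.1)).mono (fun z hz => le_trans hs hz.1)
  have := norm_image_sub_le_of_norm_deriv_le_segment' hder
    (fun u _ => hG (γ u)) t (right_mem_Icc.2 hst)
  exact this

lemma flow_taylor {L G : ℝ}
    (hγ : ∀ t ∈ Ici (0:ℝ), HasDerivWithinAt γ (gradient f (γ t)) (Ici 0) t)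
    (hgrad : Differentiable ℝ (gradient f)) (hb : ∀ z, ‖hess f z‖ ≤ L)
    (hG : ∀ z, ‖gradient f z‖ ≤ G) {t h : ℝ} (ht : 0 ≤ t) (hh : 0 ≤ h) :
    ‖γ (t + h) - γ t - h • gradient f (γ t)‖ ≤ L * G * h ^ 2 := by
  set c := gradient f (γ t) with hc
  set ψ : ℝ → Euc d := fun s => γ s - (s - t) • c with hψ
  have hder : ∀ u ∈ Icc t (t+h), HasDerivWithinAt ψ (gradient f (γ u) - c) (Icc t (t+h)) u := by
    intro u hu
    have h1 := (hγ u (le_trans ht hu.1)).mono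
      (fun z (hz : z ∈ Icc t (t+h)) => le_trans ht hz.1)
    have h2 : HasDerivWithinAt (fun s : ℝ => (s - t) • c) ((1:ℝ) • c) (Icc t (t+h)) u :=
      (((hasDerivAt_id u).sub_const t).smul_const c).hasDerivWithinAt
    have := h1.sub h2
    rwa [one_smul] at this
  have hbound : ∀ u ∈ Ico t (t+h), ‖gradient f (γ u) - c‖ ≤ L * G * h := by
    intro u hu
    have hL0 : 0 ≤ L := le_trans (norm_nonneg _) (hb 0)
    calc ‖gradient f (γ u) - c‖ ≤ L * ‖γ u - γ t‖ := grad_lipschitz hgrad hb _ _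
      _ ≤ L * (G * (u - t)) := by
          gcongr
          exact flow_dist_le hγ hG ht hu.1
      _ ≤ L * (G * h) := by
          have hG0 : 0 ≤ G := le_trans (norm_nonneg _) (hG 0)
          gcongr
          linarith [hu.2]
      _ = L * G * h := by ring
  have := norm_image_sub_le_of_norm_deriv_le_segment' hder hbound (t+h)
    (right_mem_Icc.2 (by linarith))
  have e : ψ (t+h) - ψ t = γ (t+h) - γ t - h • c := by
    rw [hψ]
    simp only [sub_self, zero_smul, sub_zero, add_sub_cancel_left]
    abel
  rw [e] at this
  calc ‖γ (t+h) - γ t - h • c‖ ≤ L * G * h * (t + h - t) := this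
    _ = L * G * h ^ 2 := by ring

lemma flow_const_of_critical {L : ℝ}
    (hγ : ∀ t ∈ Ici (0:ℝ), HasDerivWithinAt γ (gradient f (γ t)) (Ici 0) t)
    (hgrad : Differentiable ℝ (gradient f)) (hb : ∀ z, ‖hess f z‖ ≤ L)
    {t₀ : ℝ} (ht₀ : 0 ≤ t₀) (hcrit : gradient f (γ t₀) = 0) :
    ∀ t, t₀ ≤ t → γ t = γ t₀ := by
  intro b hb'
  have hL0 : 0 ≤ L := le_trans (norm_nonneg _) (hb 0)
  set F : ℝ → Euc d := fun s => γ s - γ t₀ with hF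
  have hcont : ContinuousOn F (Icc t₀ b) := by
    apply ContinuousOn.sub
    · exact (flow_continuousOn hγ).mono (fun z hz => le_trans ht₀ hz.1)
    · exact continuousOn_const
  have hder : ∀ u ∈ Ico t₀ b, HasDerivWithinAt F (gradient f (γ u)) (Ici u) u := by
    intro u hu
    exact ((hγ u (le_trans ht₀ hu.1)).mono (fun z hz => le_trans (le_trans ht₀ hu.1) hz)).sub_const _
  have hbound : ∀ u ∈ Ico t₀ b, ‖gradient f (γ u)‖ ≤ L * ‖F u‖ + 0 := by
    intro u hu
    have := grad_lipschitz hgrad hb (γ t₀) (γ u)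
    rw [hcrit, sub_zero] at this
    simpa [hF] using this
  have hF0 : ‖F t₀‖ ≤ 0 := by simp [hF]
  have := norm_le_gronwallBound_of_norm_deriv_right_le hcont hder hF0 hbound b
    (right_mem_Icc.2 hb')
  rw [gronwallBound_ε0_δ0] at this
  have : F b = 0 := by
    have h0 : ‖F b‖ = 0 := le_antisymm this (norm_nonneg _)
    exact norm_eq_zero.1 h0
  rw [hF] at this
  exact sub_eq_zero.1 this

lemma flow_backward_const {L : ℝ} {xs : Euc d}
    (hγ : ∀ t ∈ Ici (0:ℝ), HasDerivWithinAt γ (gradient f (γ t)) (Ici 0) t)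
    (hgrad : Differentiable ℝ (gradient f)) (hb : ∀ z, ‖hess f z‖ ≤ L)
    {t₀ : ℝ} (ht₀ : 0 ≤ t₀) (heq : γ t₀ = xs) (hgxs : gradient f xs = 0) :
    γ 0 = xs := by
  rcases eq_or_lt_of_le ht₀ with rfl | ht₀pos
  · exact heq
  set F : ℝ → Euc d := fun s => γ (t₀ - s) - xs with hF
  have hcont : ContinuousOn F (Icc 0 t₀) := by
    apply ContinuousOn.sub _ continuousOn_const
    apply (flow_continuousOn hγ).comp (Continuous.continuousOn (continuous_const.sub continuous_id))
    intro s hs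
    simp only [mem_Ici, Pi.sub_apply, id_eq]
    linarith [hs.2]
  have hder : ∀ s ∈ Ico 0 t₀, HasDerivWithinAt F (-gradient f (γ (t₀ - s))) (Ici s) s := by
    intro s hs
    have htpos : 0 < t₀ - s := by linarith [hs.2]
    have h1 : HasDerivAt γ (gradient f (γ (t₀ - s))) (t₀ - s) :=
      (hγ (t₀ - s) htpos.le).hasDerivAt (Ici_mem_nhds htpos)
    have h2 : HasDerivAt (fun u : ℝ => t₀ - u) (-1) s := by
      simpa using ((hasDerivAt_id s).const_sub t₀)
    have h3 := h1.scomp s h2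
    have h4 : HasDerivAt (fun s : ℝ => γ (t₀ - s)) (-gradient f (γ (t₀ - s))) s := by
      exact h3.congr_deriv (neg_one_smul ℝ _)
    exact (h4.sub_const xs).hasDerivWithinAt.mono (fun z hz => hz)
  have hbound : ∀ s ∈ Ico 0 t₀, ‖-gradient f (γ (t₀ - s))‖ ≤ L * ‖F s‖ + 0 := by
    intro s hs
    rw [norm_neg]
    have := grad_lipschitz hgrad hb xs (γ (t₀ - s))
    rw [hgxs, sub_zero] at this
    simpa [hF] using this
  have hF0 : ‖F 0‖ ≤ 0 := by simp [hF, heq]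
  have := norm_le_gronwallBound_of_norm_deriv_right_le hcont hder hF0 hbound t₀
    (right_mem_Icc.2 ht₀pos.le)
  rw [gronwallBound_ε0_δ0] at this
  have hz : F t₀ = 0 := norm_eq_zero.1 (le_antisymm this (norm_nonneg _))
  rw [hF] at hz
  simp only [sub_self] at hz
  exact sub_eq_zero.1 hz

set_option maxHeartbeats 1000000 in
/-- Phase 2: once a Max Shift point is within `ρ = (r/2)√(a/(2L))` of the mode, the
sequence is eventually constant equal to the mode. -/
lemma phase2 {d : ℕ} {f : Euc d → ℝ} (hdiff : Differentiable ℝ f)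
    (hgrad : Differentiable ℝ (gradient f))
    {L a r : ℝ} (hb : ∀ z, ‖hess f z‖ ≤ L) (ha : 0 < a) (hr : 0 < r) (haL : a ≤ L)
    {xs : Euc d}
    (hneg : ∀ z ∈ closedBall xs r, ∀ v : Euc d, ⟪hess f z v, v⟫ ≤ -a * ‖v‖ ^ 2)
    (hg0 : gradient f xs = 0)
    {ε : ℝ} (hε : 0 < ε) (hεr : ε ≤ r/2)
    {x : ℕ → Euc d}
    (hstep : ∀ k : ℕ, x (k+1) ∈ closedBall (x k) ε ∧
      (∀ y ∈ closedBall (x k) ε, f y ≤ f (x (k+1))) ∧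
      (f (x (k+1)) = f (x k) → ∀ m, k + 1 ≤ m → x m = x (k+1)))
    {K : ℕ} (hK : x K ∈ closedBall xs (r/2 * Real.sqrt (a / (2*L)))) :
    ∃ K' : ℕ, ∀ m, K' ≤ m → x m = xs := by
  have hL : 0 < L := lt_of_lt_of_le ha haL
  set ρ : ℝ := r/2 * Real.sqrt (a / (2*L)) with hρ
  have hq01 : a / (2*L) ≤ 1 := by
    rw [div_le_one (by linarith)]
    linarith
  have hsq1 : Real.sqrt (a / (2*L)) ≤ 1 := Real.sqrt_le_one.mpr hq01
  have hρle : ρ ≤ r/2 := by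
    rw [hρ]
    nlinarith [Real.sqrt_nonneg (a/(2*L))]
  have hρpos : 0 < ρ := by
    rw [hρ]
    apply mul_pos (by linarith)
    apply Real.sqrt_pos.2
    positivity
  have hρsq : ρ ^ 2 = a * r^2 / (8 * L) := by
    rw [hρ, mul_pow, Real.sq_sqrt (by positivity)]
    rw [div_pow]
    field_simp
    ring
  have hfK : f xs - a * r^2 / 8 ≤ f (x K) := by
    have htb := taylor_bound hdiff hgrad hb xs (x K)
    rw [hg0, inner_zero_left, sub_zero] at htb
    have h1 : f xs - f (x K) ≤ L * ‖x K - xs‖^2 := by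
      have := (abs_le.1 htb).1
      linarith
    have h2 : ‖x K - xs‖ ≤ ρ := by
      rw [← dist_eq_norm]
      exact hK
    have h3 : L * ‖x K - xs‖^2 ≤ L * ρ^2 := by
      gcongr
    rw [hρsq] at h3
    have h4 : L * (a * r^2 / (8*L)) = a * r^2/8 := by field_simp
    rw [h4] at h3
    linarith
  have hmono : ∀ k, f (x k) ≤ f (x (k+1)) := fun k =>
    (hstep k).2.1 (x k) (mem_closedBall_self hε.le)
  have hmono' : ∀ k m, k ≤ m → f (x k) ≤ f (x m) := fun k m hkm =>
    monotone_nat_of_le_succ hmono hkm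
  -- invariant: stay in closedBall xs (r/2)
  have hinv : ∀ k, K ≤ k → x k ∈ closedBall xs (r/2) := by
    intro k hk
    induction k with
    | zero =>
        have h0 : K = 0 := Nat.le_zero.1 hk
        rw [h0] at hK
        exact closedBall_subset_closedBall (by linarith) hK
    | succ n ih =>
        rcases Nat.lt_or_ge K (n+1) with h | h
        · have hn : K ≤ n := Nat.lt_succ_iff.1 h
          have hxn := ih hn
          have hball : x (n+1) ∈ closedBall xs r := by
            rw [mem_closedBall]
            calc dist (x (n+1)) xs ≤ dist (x (n+1)) (x n) + dist (x n) xs := dist_triangle _ _ _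
              _ ≤ ε + r/2 := add_le_add (mem_closedBall.1 (hstep n).1) (mem_closedBall.1 hxn)
              _ ≤ r := by linarith
          have hqu := quad_upper hdiff hgrad ha hneg hg0 hball
          have hfk : f xs - a * r^2/8 ≤ f (x (n+1)) :=
            le_trans hfK (hmono' K (n+1) hk)
          have h5 : a/2 * ‖x (n+1) - xs‖^2 ≤ a/2 * (r^2/4) := by linarith
          have hd2 : ‖x (n+1) - xs‖^2 ≤ (r/2)^2 := by
            have h6 := le_of_mul_le_mul_left h5 (by linarith : (0:ℝ) < a/2)
            have h7 : r^2/4 = (r/2)^2 := by ring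
            linarith
          have h8 := Real.sqrt_le_sqrt hd2
          rw [Real.sqrt_sq (norm_nonneg _), Real.sqrt_sq (by linarith : (0:ℝ) ≤ r/2)] at h8
          rw [mem_closedBall, dist_eq_norm]
          exact h8
        · have h9 : K = n+1 := le_antisymm hk h
          rw [h9] at hK
          exact closedBall_subset_closedBall (by linarith) hK
  -- f is at most f xs on the sequence from K on
  have hub : ∀ k, K ≤ k → f (x k) ≤ f xs := by
    intro k hk
    have hball := closedBall_subset_closedBall (by linarith : r/2 ≤ r) (hinv k hk)
    have hq := quad_upper hdiff hgrad ha hneg hg0 hball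
    have hnn : (0:ℝ) ≤ a/2 * ‖x k - xs‖^2 := by positivity
    linarith
  -- progress: some iterate gets within ε of xs
  have hprog : ∃ k, K ≤ k ∧ dist (x k) xs ≤ ε := by
    by_contra hcon
    push_neg at hcon
    set δ : ℝ := a * ε^3 / r with hδ
    have hδpos : 0 < δ := by rw [hδ]; positivity
    have hgain : ∀ k, K ≤ k → f (x k) + δ ≤ f (x (k+1)) := by
      intro k hk
      have hxk := hinv k hk
      have hxkr : x k ∈ closedBall xs r :=
        closedBall_subset_closedBall (by linarith : r/2 ≤ r) hxk
      have hdk : ε < dist (x k) xs := hcon k hk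
      have hdk2 : dist (x k) xs ≤ r/2 := mem_closedBall.1 hxk
      obtain ⟨D, hD⟩ : ∃ D : ℝ, D = ‖x k - xs‖ := ⟨_, rfl⟩
      have hDdist : D = dist (x k) xs := by rw [hD, dist_eq_norm]
      have hDpos : 0 < D := by rw [hDdist]; linarith
      have hDle : D ≤ r/2 := by rw [hDdist]; exact hdk2
      have hεD : ε < D := by rw [hDdist]; exact hdk
      obtain ⟨θ, hθ⟩ : ∃ θ : ℝ, θ = ε / D := ⟨_, rfl⟩
      have hθ0 : 0 ≤ θ := by rw [hθ]; positivity
      have hθ1 : θ ≤ 1 := by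
        rw [hθ, div_le_one hDpos]
        linarith
      have hseg := segment_concave_lower hdiff hgrad ha hneg hxkr hθ0 hθ1
      have hyball : x k + θ • (xs - x k) ∈ closedBall (x k) ε := by
        rw [mem_closedBall, dist_eq_norm, add_sub_cancel_left, norm_smul,
          Real.norm_eq_abs, abs_of_nonneg hθ0, norm_sub_rev, ← hD, hθ,
          div_mul_cancel₀ _ (ne_of_gt hDpos)]
      have hfy := (hstep k).2.1 _ hyball
      have hgap : a/2 * ε^2 ≤ f xs - f (x k) := by
        have hq := quad_upper hdiff hgrad ha hneg hg0 hxkr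
        have hε2 : a/2 * ε^2 ≤ a/2 * ‖x k - xs‖^2 := by
          gcongr
          rw [← hD]
          exact hεD.le
        linarith
      have hθbig : 2*ε/r ≤ θ := by
        rw [hθ, div_le_div_iff₀ hr hDpos]
        nlinarith
      have hmul : (2*ε/r) * (a/2 * ε^2) ≤ θ * (f xs - f (x k)) :=
        mul_le_mul hθbig hgap (by positivity) hθ0
      have heqδ : (2*ε/r) * (a/2 * ε^2) = δ := by
        rw [hδ]; field_simp
      rw [heqδ] at hmul
      linarith
    have hgrow : ∀ n : ℕ, f (x K) + n * δ ≤ f (x (K + n)) := by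
      intro n
      induction n with
      | zero => simp
      | succ m ih =>
          have hstep2 := hgain (K + m) (Nat.le_add_right K m)
          have hidx : K + (m + 1) = (K + m) + 1 := by omega
          rw [hidx]
          push_cast
          linarith
    obtain ⟨n, hn⟩ := exists_nat_gt ((f xs - f (x K)) / δ)
    have hnδ : f xs - f (x K) < n * δ := by
      rw [div_lt_iff₀ hδpos] at hn
      linarith
    have := hgrow n
    have := hub (K + n) (Nat.le_add_right K n)
    linarith
  -- capture
  obtain ⟨k, hkK, hdk⟩ := hprog
  have hxsball : xs ∈ closedBall (x k) ε := by
    rw [mem_closedBall, dist_comm]; exact hdk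
  have hfs : f xs ≤ f (x (k+1)) := (hstep k).2.1 xs hxsball
  have hsmall : ∀ j, K ≤ j → f xs ≤ f (x j) → x j = xs := by
    intro j hj hfj
    have hballj : x j ∈ closedBall xs r :=
      closedBall_subset_closedBall (by linarith : r/2 ≤ r) (hinv j hj)
    have hq := quad_upper hdiff hgrad ha hneg hg0 hballj
    have h2 : a/2 * ‖x j - xs‖^2 ≤ a/2 * 0 := by rw [mul_zero]; linarith
    have h3 : ‖x j - xs‖^2 ≤ 0 := le_of_mul_le_mul_left h2 (by linarith : (0:ℝ) < a/2)
    have h4 : ‖x j - xs‖^2 = 0 := le_antisymm h3 (by positivity)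
    have h5 : ‖x j - xs‖ = 0 := by
      exact sq_eq_zero_iff.mp h4
    exact sub_eq_zero.1 (norm_eq_zero.1 h5)
  have heq1 : x (k+1) = xs := hsmall (k+1) (le_trans hkK (Nat.le_succ k)) hfs
  have hfeq : f (x (k+1+1)) = f (x (k+1)) := by
    have h1 : f (x (k+1)) ≤ f (x (k+2)) := hmono (k+1)
    have h2 : f (x (k+2)) ≤ f xs := hub (k+2) (le_trans hkK (by omega))
    have h3 : f (x (k+2)) ≤ f (x (k+1)) := by rw [heq1]; exact h2
    exact le_antisymm h3 h1
  have hconst := (hstep (k+1)).2.2 hfeq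
  have heq2 : x (k+2) = xs := by
    apply hsmall (k+2) (le_trans hkK (by omega))
    rw [hfeq, heq1]
  refine ⟨k+1, fun m hm => ?_⟩
  rcases eq_or_lt_of_le hm with rfl | hlt
  · exact heq1
  · have hm2 : k + 1 + 1 ≤ m := hlt
    rw [hconst m hm2, heq2]
set_option maxHeartbeats 2000000 in
/-- Phase 1: for small `ε`, any Max Shift sequence started at `x₀` in the basin reaches the
ball of radius `ρ` around the mode. -/
lemma phase1 {d : ℕ} {f : Euc d → ℝ} (hdiff : Differentiable ℝ f)
    (hgrad : Differentiable ℝ (gradient f))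
    {L G : ℝ} (hb : ∀ z, ‖hess f z‖ ≤ L) (hG : ∀ z, ‖gradient f z‖ ≤ G)
    (hL : 0 < L) (hGpos : 0 < G)
    {γ : ℝ → Euc d} {x₀ xs : Euc d} {ρ : ℝ} (hρ : 0 < ρ)
    (hγ0 : γ 0 = x₀)
    (hγ : ∀ t ∈ Ici (0:ℝ), HasDerivWithinAt γ (gradient f (γ t)) (Ici 0) t)
    (hbasin : Tendsto γ atTop (𝓝 xs)) (hgxs : gradient f xs = 0) (hx₀ : x₀ ≠ xs) :
    ∃ ε₁ : ℝ, 0 < ε₁ ∧ ∀ ε, 0 < ε → ε ≤ ε₁ → ∀ x : ℕ → Euc d,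
      x 0 = x₀ →
      (∀ k : ℕ, x (k+1) ∈ closedBall (x k) ε ∧
        (∀ y ∈ closedBall (x k) ε, f y ≤ f (x (k+1))) ∧
        (f (x (k+1)) = f (x k) → ∀ m, k + 1 ≤ m → x m = x (k+1))) →
      ∃ K : ℕ, x K ∈ closedBall xs ρ := by
  classical
  -- time to get close
  obtain ⟨T₀, hT₀⟩ := (Metric.tendsto_atTop.1 hbasin (ρ/2) (by linarith))
  set T := max T₀ 0 with hT
  have hT0 : (0:ℝ) ≤ T := le_max_right _ _
  have hγT : dist (γ T) xs < ρ/2 := hT₀ T (le_max_left _ _)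
  -- the flow never hits a critical point
  have hnc : ∀ t, 0 ≤ t → gradient f (γ t) ≠ 0 := by
    intro t ht hcrit
    have hconst := flow_const_of_critical hγ hgrad hb ht hcrit
    have hlim : Tendsto γ atTop (𝓝 (γ t)) := by
      apply Tendsto.congr' _ tendsto_const_nhds
      filter_upwards [eventually_ge_atTop t] with s hs
      exact (hconst s hs).symm
    have heq : γ t = xs := tendsto_nhds_unique hlim hbasin
    have h0 := flow_backward_const hγ hgrad hb ht heq hgxs
    rw [hγ0] at h0
    exact hx₀ h0
  -- minimum gradient norm along the flow on [0, T]
  have hγcont : ContinuousOn γ (Icc 0 T) := (flow_continuousOn hγ).mono (fun z hz => hz.1)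
  have hncont : ContinuousOn (fun t => ‖gradient f (γ t)‖) (Icc 0 T) :=
    (hgrad.continuous.comp_continuousOn hγcont).norm
  obtain ⟨tm, htm, htmin⟩ := isCompact_Icc.exists_isMinOn (nonempty_Icc.2 hT0) hncont
  set m := ‖gradient f (γ tm)‖ with hm
  have hmpos : 0 < m := norm_pos_iff.2 (hnc tm htm.1)
  have hmin : ∀ t ∈ Icc (0:ℝ) T, m ≤ ‖gradient f (γ t)‖ := fun t ht => htmin ht
  have hmG : m ≤ G := le_trans (le_refl m) (hG _)
  -- constants
  set Λ : ℝ := 2*L/m with hΛdef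
  have hΛpos : 0 < Λ := by rw [hΛdef]; positivity
  set C₁ : ℝ := Real.sqrt (8*L/m) with hC₁def
  have hC₁pos : 0 < C₁ := Real.sqrt_pos.2 (by positivity)
  set C₃ : ℝ := C₁ + L*G/m^2 with hC₃def
  have hC₃pos : 0 < C₃ := by rw [hC₃def]; positivity
  set C₄ : ℝ := (C₃/Λ) * Real.exp (Λ*T*G + Λ) with hC₄def
  have hC₄pos : 0 < C₄ := by
    rw [hC₄def]
    apply mul_pos (by positivity) (Real.exp_pos _)
  set ε₁ : ℝ := min 1 (min ((m/(2*L*C₄))^2) (min ((ρ/(4*C₄))^2) (ρ*m/(4*G)))) with hε₁def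
  have hε₁pos : 0 < ε₁ := by
    rw [hε₁def]
    apply lt_min one_pos
    apply lt_min (by positivity)
    apply lt_min (by positivity) (by positivity)
  refine ⟨ε₁, hε₁pos, ?_⟩
  intro ε hε hεle x hx0 hstep
  have hε1 : ε ≤ 1 := le_trans hεle (min_le_left _ _)
  have hsε : Real.sqrt ε ≤ Real.sqrt ε₁ := Real.sqrt_le_sqrt hεle
  have hsεpos : 0 < Real.sqrt ε := Real.sqrt_pos.2 hε
  have hεsqrt : ε ≤ Real.sqrt ε := by
    nlinarith [Real.sq_sqrt hε.le, Real.sqrt_nonneg ε, hsεpos]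
  -- derived smallness conditions
  have hEb1 : C₄ * Real.sqrt ε ≤ m/(2*L) := by
    have h1 : ε ≤ (m/(2*L*C₄))^2 := le_trans hεle (le_trans (min_le_right _ _) (min_le_left _ _))
    have h2 : Real.sqrt ε ≤ m/(2*L*C₄) := by
      have := Real.sqrt_le_sqrt h1
      rwa [Real.sqrt_sq (by positivity)] at this
    calc C₄ * Real.sqrt ε ≤ C₄ * (m/(2*L*C₄)) := by gcongr
      _ = m/(2*L) := by field_simp
  have hEb2 : C₄ * Real.sqrt ε ≤ ρ/4 := by
    have h1 : ε ≤ (ρ/(4*C₄))^2 := le_trans hεle (le_trans (min_le_right _ _)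
      (le_trans (min_le_right _ _) (min_le_left _ _)))
    have h2 : Real.sqrt ε ≤ ρ/(4*C₄) := by
      have := Real.sqrt_le_sqrt h1
      rwa [Real.sqrt_sq (by positivity)] at this
    calc C₄ * Real.sqrt ε ≤ C₄ * (ρ/(4*C₄)) := by gcongr
      _ = ρ/4 := by field_simp
  have hEb3 : G*ε/m ≤ ρ/4 := by
    have h1 : ε ≤ ρ*m/(4*G) := le_trans hεle (le_trans (min_le_right _ _)
      (le_trans (min_le_right _ _) (min_le_right _ _)))
    rw [div_le_div_iff₀ (by positivity) (by norm_num : (0:ℝ) < 4)]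
    rw [le_div_iff₀ (by positivity)] at h1
    nlinarith
  -- the discrete times
  set t : ℕ → ℝ := fun k => Nat.recAux (0:ℝ) (fun _ tk => tk + ε / ‖gradient f (γ tk)‖) k
    with htdef
  have ht0 : t 0 = 0 := rfl
  have htsucc : ∀ k, t (k+1) = t k + ε / ‖gradient f (γ (t k))‖ := fun k => rfl
  -- the deviation bound sequence
  set E : ℕ → ℝ := fun k => (C₃ * Real.sqrt ε / Λ) * ((1+Λ*ε)^k - 1) with hEdef
  have hE0 : E 0 = 0 := by rw [hEdef]; simp
  have hEsucc : ∀ k, E (k+1) = (1+Λ*ε) * E k + C₃ * Real.sqrt ε * ε := by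
    intro k
    rw [hEdef]
    simp only []
    rw [pow_succ]
    field_simp
    ring
  have hEnonneg : ∀ k, 0 ≤ E k := by
    intro k
    rw [hEdef]
    apply mul_nonneg (by positivity)
    have h1 : (1:ℝ) ≤ 1 + Λ*ε := by nlinarith
    have : (1:ℝ) ≤ (1+Λ*ε)^k := by
      calc (1:ℝ) = 1^k := (one_pow k).symm
        _ ≤ (1+Λ*ε)^k := pow_le_pow_left₀ zero_le_one h1 k
    linarith
  -- uniform bound on E k as long as k * (ε/G) ≤ T
  have hEbound : ∀ k : ℕ, (k:ℝ) * (ε/G) ≤ T → E k ≤ C₄ * Real.sqrt ε := by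
    intro k hk
    have hkε : (k:ℝ) * ε ≤ T * G := by
      have := mul_le_mul_of_nonneg_right hk hGpos.le
      rw [mul_assoc, div_mul_cancel₀ _ (ne_of_gt hGpos)] at this
      exact this
    have hexp1 : (1+Λ*ε) ≤ Real.exp (Λ*ε) := by
      have := Real.add_one_le_exp (Λ*ε)
      linarith
    have hexp2 : (1+Λ*ε)^k ≤ Real.exp ((k:ℝ) * (Λ*ε)) := by
      calc (1+Λ*ε)^k ≤ (Real.exp (Λ*ε))^k := by
            apply pow_le_pow_left₀ (by positivity) hexp1
        _ = Real.exp ((k:ℝ) * (Λ*ε)) := by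
            rw [← Real.exp_nat_mul]
    have hexp3 : (k:ℝ) * (Λ*ε) ≤ Λ*T*G + Λ := by
      have h4 : (k:ℝ)*(Λ*ε) = Λ * ((k:ℝ)*ε) := by ring
      rw [h4]
      have h5 : Λ * ((k:ℝ)*ε) ≤ Λ * (T*G) := by
        apply mul_le_mul_of_nonneg_left hkε hΛpos.le
      nlinarith [hΛpos]
    have hexp4 : (1+Λ*ε)^k - 1 ≤ Real.exp (Λ*T*G + Λ) := by
      have := le_trans hexp2 (Real.exp_le_exp.2 hexp3)
      linarith
    rw [hEdef, hC₄def]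
    calc C₃ * Real.sqrt ε / Λ * ((1+Λ*ε)^k - 1)
        ≤ C₃ * Real.sqrt ε / Λ * Real.exp (Λ*T*G + Λ) := by
          apply mul_le_mul_of_nonneg_left hexp4 (by positivity)
      _ = C₃/Λ * Real.exp (Λ*T*G + Λ) * Real.sqrt ε := by ring
  -- the main induction
  have claim : ∀ k : ℕ, (∀ j, j < k → t j ≤ T) →
      0 ≤ t k ∧ (k:ℝ) * (ε/G) ≤ t k ∧ ‖x k - γ (t k)‖ ≤ E k := by
    intro k
    induction k with
    | zero =>
        intro _
        refine ⟨le_refl 0, by simp [ht0], ?_⟩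
        rw [ht0, hγ0, hx0, sub_self, norm_zero, hE0]
    | succ n ih =>
        intro hjT
        obtain ⟨htn0, htnlow, hxn⟩ := ih (fun j hj => hjT j (lt_trans hj (Nat.lt_succ_self n)))
        have htnT : t n ≤ T := hjT n (Nat.lt_succ_self n)
        have hEn : E n ≤ C₄ * Real.sqrt ε := hEbound n (le_trans htnlow htnT)
        have hEm2L : E n ≤ m/(2*L) := le_trans hEn hEb1
        have hgγn : m ≤ ‖gradient f (γ (t n))‖ := hmin _ ⟨htn0, htnT⟩
        have hgγn0 : gradient f (γ (t n)) ≠ 0 := hnc (t n) htn0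
        -- gradient at x n is sizable
        have hlipn : ‖gradient f (x n) - gradient f (γ (t n))‖ ≤ L * E n := by
          calc ‖gradient f (x n) - gradient f (γ (t n))‖ ≤ L * ‖x n - γ (t n)‖ :=
                grad_lipschitz hgrad hb _ _
            _ ≤ L * E n := by gcongr
        have hgxn : m/2 ≤ ‖gradient f (x n)‖ := by
          have htri : ‖gradient f (γ (t n))‖ ≤ ‖gradient f (x n)‖ +
              ‖gradient f (x n) - gradient f (γ (t n))‖ := by
            have := norm_sub_norm_le (gradient f (x n)) (gradient f (γ (t n)))
            have h2 := abs_le.1 (abs_norm_sub_norm_le (gradient f (x n)) (gradient f (γ (t n))))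
            linarith [h2.2]
          have hLE : L * E n ≤ m/2 := by
            calc L * E n ≤ L * (m/(2*L)) := by gcongr
              _ = m/2 := by field_simp
          linarith
        have hgxn0 : gradient f (x n) ≠ 0 := by
          intro h0
          rw [h0, norm_zero] at hgxn
          linarith
        have hgnpos : 0 < ‖gradient f (x n)‖ := norm_pos_iff.2 hgxn0
        -- the max shift step almost follows the normalized gradient
        have hΔnorm : ‖x (n+1) - x n‖ ≤ ε := by
          rw [← dist_eq_norm]
          exact mem_closedBall.1 (hstep n).1
        have hu1 : ‖(‖gradient f (x n)‖⁻¹ • gradient f (x n) : Euc d)‖ = 1 := by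
          rw [norm_smul, Real.norm_eq_abs, abs_of_pos (inv_pos.2 (norm_pos_iff.2 hgxn0)),
            inv_mul_cancel₀ (ne_of_gt (norm_pos_iff.2 hgxn0))]
        have hεu : ‖(ε • (‖gradient f (x n)‖⁻¹ • gradient f (x n)) : Euc d)‖ = ε := by
          rw [norm_smul, hu1, Real.norm_eq_abs, abs_of_pos hε, mul_one]
        have hp : x n + ε • (‖gradient f (x n)‖⁻¹ • gradient f (x n)) ∈ closedBall (x n) ε := by
          rw [mem_closedBall, dist_eq_norm, add_sub_cancel_left, hεu]
        have hfp := (hstep n).2.1 _ hp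
        have hinner_u : ⟪gradient f (x n), ε • (‖gradient f (x n)‖⁻¹ • gradient f (x n))⟫
            = ε * ‖gradient f (x n)‖ := by
          rw [real_inner_smul_right, real_inner_smul_right, real_inner_self_eq_norm_sq,
            pow_two, inv_mul_cancel_left₀ (ne_of_gt hgnpos)]
        have htay1 := taylor_bound hdiff hgrad hb (x n)
          (x n + ε • (‖gradient f (x n)‖⁻¹ • gradient f (x n)))
        rw [add_sub_cancel_left, hinner_u, hεu] at htay1
        have htay2 := taylor_bound hdiff hgrad hb (x n) (x (n+1))
        have hΔsq : ‖x (n+1) - x n‖^2 ≤ ε^2 := by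
          apply pow_le_pow_left₀ (norm_nonneg _) hΔnorm
        have hinnerΔ : ε * ‖gradient f (x n)‖ - 2*(L*ε^2) ≤
            ⟪gradient f (x n), x (n+1) - x n⟫ := by
          have h1 := (abs_le.1 htay1).1
          have h2 := (abs_le.1 htay2).2
          have h3 : f (x n) + ε * ‖gradient f (x n)‖ - L*ε^2 ≤
              f (x n + ε • (‖gradient f (x n)‖⁻¹ • gradient f (x n))) := by linarith
          have h5 : L * ‖x (n+1) - x n‖^2 ≤ L * ε^2 :=
            mul_le_mul_of_nonneg_left hΔsq hL.le
          have h4 : f (x (n+1)) ≤ f (x n) + ⟪gradient f (x n), x (n+1) - x n⟫ + L*ε^2 := by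
            linarith
          linarith
        -- hence the step is close to ε • u
        have hinv2m : ‖gradient f (x n)‖⁻¹ ≤ 2/m := by
          have h1 : (m/2)⁻¹ = 2/m := by
            rw [inv_div]
          rw [← h1]
          exact inv_anti₀ (by positivity) hgxn
        have hsub2 : ‖x (n+1) - x n - ε • (‖gradient f (x n)‖⁻¹ • gradient f (x n))‖^2
            ≤ 8*L*ε^3/m := by
          have hexpand := norm_sub_sq_real (x (n+1) - x n)
            (ε • (‖gradient f (x n)‖⁻¹ • gradient f (x n)))
          have hip : ⟪x (n+1) - x n, ε • (‖gradient f (x n)‖⁻¹ • gradient f (x n))⟫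
              = ε * ‖gradient f (x n)‖⁻¹ * ⟪gradient f (x n), x (n+1) - x n⟫ := by
            rw [real_inner_smul_right, real_inner_smul_right, real_inner_comm]
            ring
          rw [hip, hεu] at hexpand
          have hNN : ‖gradient f (x n)‖⁻¹ * ‖gradient f (x n)‖ = 1 :=
            inv_mul_cancel₀ (ne_of_gt hgnpos)
          have h6 : 2*ε*‖gradient f (x n)‖⁻¹*(ε*‖gradient f (x n)‖ - 2*(L*ε^2)) ≤
              2*ε*‖gradient f (x n)‖⁻¹*⟪gradient f (x n), x (n+1) - x n⟫ := by
            apply mul_le_mul_of_nonneg_left hinnerΔ (by positivity)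
          have h7 : 2*ε*‖gradient f (x n)‖⁻¹*(ε*‖gradient f (x n)‖ - 2*(L*ε^2))
              = 2*ε^2*(‖gradient f (x n)‖⁻¹*‖gradient f (x n)‖)
                - 4*L*ε^3*‖gradient f (x n)‖⁻¹ := by ring
          rw [hNN] at h7
          have h8 : 4*L*ε^3*‖gradient f (x n)‖⁻¹ ≤ 4*L*ε^3*(2/m) := by
            apply mul_le_mul_of_nonneg_left hinv2m (by positivity)
          have h9 : 4*L*ε^3*(2/m) = 8*L*ε^3/m := by ring
          rw [hexpand]
          linarith [hΔsq, h6, h7, h8]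
        have hsub : ‖x (n+1) - x n - ε • (‖gradient f (x n)‖⁻¹ • gradient f (x n))‖
            ≤ C₁ * (Real.sqrt ε * ε) := by
          apply sq_le_imp (norm_nonneg _) (by positivity)
          have hC₁sq : C₁^2 = 8*L/m := Real.sq_sqrt (by positivity)
          have hsqε : (Real.sqrt ε)^2 = ε := Real.sq_sqrt hε.le
          calc ‖x (n+1) - x n - ε • (‖gradient f (x n)‖⁻¹ • gradient f (x n))‖^2
              ≤ 8*L*ε^3/m := hsub2
            _ = (C₁ * (Real.sqrt ε * ε))^2 := by
                rw [mul_pow, mul_pow, hC₁sq, hsqε]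
                ring
        -- the flow step
        have hh0 : 0 ≤ ε / ‖gradient f (γ (t n))‖ := by positivity
        have hhm : ε / ‖gradient f (γ (t n))‖ ≤ ε/m :=
          div_le_div_of_nonneg_left hε.le hmpos hgγn
        have hflow := flow_taylor hγ hgrad hb hG htn0 hh0
        have hflow3 : ‖γ (t n + ε / ‖gradient f (γ (t n))‖) - γ (t n)
            - (ε / ‖gradient f (γ (t n))‖) • gradient f (γ (t n))‖
            ≤ (L*G/m^2) * (Real.sqrt ε * ε) := by
          calc ‖γ (t n + ε / ‖gradient f (γ (t n))‖) - γ (t n)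
              - (ε / ‖gradient f (γ (t n))‖) • gradient f (γ (t n))‖
              ≤ L * G * (ε / ‖gradient f (γ (t n))‖)^2 := hflow
            _ ≤ L * G * (ε/m)^2 := by gcongr
            _ = (L*G/m^2) * (ε*ε) := by
                rw [div_pow]
                ring
            _ ≤ (L*G/m^2) * (Real.sqrt ε * ε) := by
                have hc : (0:ℝ) ≤ L*G/m^2 := by positivity
                have h2 : ε*ε ≤ Real.sqrt ε * ε := mul_le_mul_of_nonneg_right hεsqrt hε.le
                exact mul_le_mul_of_nonneg_left h2 hc
        have hhsmul : (ε / ‖gradient f (γ (t n))‖) • gradient f (γ (t n))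
            = ε • (‖gradient f (γ (t n))‖⁻¹ • gradient f (γ (t n))) := by
          rw [smul_smul, div_eq_mul_inv]
        have hud : ‖(‖gradient f (x n)‖⁻¹ • gradient f (x n))
            - (‖gradient f (γ (t n))‖⁻¹ • gradient f (γ (t n)))‖ ≤ 2*(L*E n)/m := by
          calc ‖(‖gradient f (x n)‖⁻¹ • gradient f (x n))
              - (‖gradient f (γ (t n))‖⁻¹ • gradient f (γ (t n)))‖
              ≤ 2 * ‖gradient f (x n) - gradient f (γ (t n))‖ / ‖gradient f (γ (t n))‖ :=
                unit_diff_le hgxn0 hgγn0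
            _ ≤ 2*(L*E n)/m := by
                apply div_le_div₀ (mul_nonneg (by norm_num) (mul_nonneg hL.le (hEnonneg n)))
                  ?_ hmpos hgγn
                have h2 : (0:ℝ) ≤ 2 := by norm_num
                calc 2 * ‖gradient f (x n) - gradient f (γ (t n))‖ ≤ 2 * (L * E n) := by
                      apply mul_le_mul_of_nonneg_left hlipn h2
                  _ ≤ 2*(L*E n) := le_refl _
        -- assemble
        have hsplit : x (n+1) - γ (t (n+1)) =
            (x (n+1) - x n - ε • (‖gradient f (x n)‖⁻¹ • gradient f (x n)))
            + ε • ((‖gradient f (x n)‖⁻¹ • gradient f (x n))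
                - (‖gradient f (γ (t n))‖⁻¹ • gradient f (γ (t n))))
            + (x n - γ (t n))
            - (γ (t n + ε / ‖gradient f (γ (t n))‖) - γ (t n)
               - (ε / ‖gradient f (γ (t n))‖) • gradient f (γ (t n))) := by
          rw [htsucc n, hhsmul, smul_sub]
          abel
        have hnormbound : ‖x (n+1) - γ (t (n+1))‖ ≤ E (n+1) := by
          have htri1 := norm_sub_le
            ((x (n+1) - x n - ε • (‖gradient f (x n)‖⁻¹ • gradient f (x n)))
            + ε • ((‖gradient f (x n)‖⁻¹ • gradient f (x n))
                - (‖gradient f (γ (t n))‖⁻¹ • gradient f (γ (t n))))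
            + (x n - γ (t n)))
            (γ (t n + ε / ‖gradient f (γ (t n))‖) - γ (t n)
               - (ε / ‖gradient f (γ (t n))‖) • gradient f (γ (t n)))
          have htri2 := norm_add₃_le (E := Euc d)
            (a := x (n+1) - x n - ε • (‖gradient f (x n)‖⁻¹ • gradient f (x n)))
            (b := ε • ((‖gradient f (x n)‖⁻¹ • gradient f (x n))
                - (‖gradient f (γ (t n))‖⁻¹ • gradient f (γ (t n)))))
            (c := x n - γ (t n))
          have hBnorm : ‖(ε • ((‖gradient f (x n)‖⁻¹ • gradient f (x n))
              - (‖gradient f (γ (t n))‖⁻¹ • gradient f (γ (t n)))) : Euc d)‖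
              ≤ ε * (2*(L*E n)/m) := by
            rw [norm_smul, Real.norm_eq_abs, abs_of_pos hε]
            exact mul_le_mul_of_nonneg_left hud hε.le
          have hsum : ‖x (n+1) - γ (t (n+1))‖ ≤
              C₁ * (Real.sqrt ε * ε) + ε * (2*(L*E n)/m) + E n
              + (L*G/m^2) * (Real.sqrt ε * ε) := by
            rw [hsplit]
            refine le_trans htri1 (le_trans (add_le_add htri2 le_rfl) ?_)
            exact add_le_add (add_le_add (add_le_add hsub hBnorm) hxn) hflow3
          calc ‖x (n+1) - γ (t (n+1))‖ ≤ C₁ * (Real.sqrt ε * ε) + ε * (2*(L*E n)/m) + E n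
                  + (L*G/m^2) * (Real.sqrt ε * ε) := hsum
            _ = E (n+1) := by
                rw [hEsucc n, hC₃def, hΛdef]
                field_simp
                ring
        refine ⟨by positivity, ?_, hnormbound⟩
        rw [htsucc n]
        have hsteplow : ε/G ≤ ε / ‖gradient f (γ (t n))‖ :=
          div_le_div_of_nonneg_left hε.le (norm_pos_iff.2 hgγn0) (hG _)
        push_cast
        linarith
  -- the times eventually exceed T
  have hex : ∃ k, T < t k := by
    by_contra hcon
    push_neg at hcon
    obtain ⟨n, hn⟩ := exists_nat_gt (T * G / ε)
    have hclaim := claim n (fun j _ => hcon j)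
    have hlow := hclaim.2.1
    have hTlt : T < (n:ℝ) * (ε/G) := by
      have h2 : T * G / ε * (ε / G) = T := by field_simp
      have h3 : T * G / ε * (ε/G) < (n:ℝ) * (ε/G) :=
        mul_lt_mul_of_pos_right hn (by positivity)
      rw [h2] at h3
      exact h3
    linarith [hcon n]
  set K := Nat.find hex with hKdef
  have hKT : T < t K := Nat.find_spec hex
  have hKpos : K ≠ 0 := by
    intro h0
    rw [h0, ht0] at hKT
    linarith
  obtain ⟨n, hKn⟩ : ∃ n, K = n + 1 :=
    ⟨K - 1, (Nat.succ_pred_eq_of_pos (Nat.pos_of_ne_zero hKpos)).symm⟩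
  have hprior : ∀ j, j < K → t j ≤ T := fun j hj => not_lt.1 (Nat.find_min hex hj)
  have hclaim := claim n (fun j hj => hprior j (by omega))
  obtain ⟨htn0, htnlow, hxn⟩ := hclaim
  have htnT : t n ≤ T := hprior n (by omega)
  have hgγ : m ≤ ‖gradient f (γ (t n))‖ := hmin _ ⟨htn0, htnT⟩
  have hstepT : T - t n ≤ ε/m := by
    have h1 : ε / ‖gradient f (γ (t n))‖ ≤ ε/m :=
      div_le_div_of_nonneg_left hε.le hmpos hgγ
    rw [hKn, htsucc n] at hKT
    linarith
  have hflowd : ‖γ T - γ (t n)‖ ≤ G * (ε/m) := by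
    calc ‖γ T - γ (t n)‖ ≤ G * (T - t n) := flow_dist_le hγ hG htn0 htnT
      _ ≤ G * (ε/m) := by gcongr
  have hEn : E n ≤ C₄ * Real.sqrt ε := hEbound n (le_trans htnlow htnT)
  refine ⟨n, ?_⟩
  rw [mem_closedBall]
  calc dist (x n) xs ≤ dist (x n) (γ (t n)) + dist (γ (t n)) (γ T) + dist (γ T) xs :=
        dist_triangle4 _ _ _ _
    _ ≤ E n + G * (ε/m) + ρ/2 := by
        apply add_le_add (add_le_add ?_ ?_) hγT.le
        · rw [dist_eq_norm]; exact hxn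
        · rw [dist_eq_norm, norm_sub_rev]; exact hflowd
    _ ≤ ρ/4 + ρ/4 + ρ/2 := by
        apply add_le_add (add_le_add ?_ ?_) (le_refl _)
        · exact le_trans hEn hEb2
        · calc G * (ε/m) = G*ε/m := by ring
            _ ≤ ρ/4 := hEb3
    _ = ρ := by ring


end MaxShiftProof

/-- Max Shift is consistent: started at any point of the basin of attraction
of a mode `x⋆`, for `ε` small enough every Max Shift sequence is eventually constant equal
to `x⋆`. -/
theorem maxShift_consistent
    {d : ℕ} (hd : 0 < d) (f : Euc d → ℝ) (hf : IsNiceDensity f)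
    (xstar : Euc d) (hmode : IsLocalMax f xstar)
    (x₀ : Euc d) (γ : ℝ → Euc d) (hγ : IsGradFlow f x₀ γ)
    (hbasin : Tendsto γ atTop (𝓝 xstar)) :
    ∃ ε₀ > (0:ℝ), ∀ ε, 0 < ε → ε ≤ ε₀ →
      ∀ x : ℕ → Euc d, IsMaxShiftSeq f ε x₀ x →
        ∃ K : ℕ, ∀ m, K ≤ m → x m = xstar := by
  obtain ⟨-, -, -, hdiff, hgrad, -, ⟨G₀, hG₀⟩, ⟨L₀, hL₀⟩, -, -, huch, hmorse⟩ := hf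
  obtain ⟨hγ0, hγ2⟩ := hγ
  -- critical point and nondegeneracy
  have hg0 : gradient f xstar = 0 := grad_localMax_eq_zero hdiff hmode
  have hinj : Function.Injective (hess f xstar) := (hmorse xstar hg0).1
  obtain ⟨a, ha, hBneg⟩ := neg_definite_at_max hd hdiff hgrad hmode hinj
  -- uniform bound constants
  set L : ℝ := max L₀ a with hLdef
  have hb : ∀ z, ‖hess f z‖ ≤ L := fun z => le_trans (hL₀ z) (le_max_left _ _)
  have haL : a ≤ L := le_max_right _ _
  have hL : 0 < L := lt_of_lt_of_le ha haL
  set G : ℝ := G₀ + 1 with hGdef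
  have hG₀0 : 0 ≤ G₀ := le_trans (norm_nonneg _) (hG₀ 0)
  have hG : ∀ z, ‖gradient f z‖ ≤ G := fun z => le_trans (hG₀ z) (by linarith)
  have hGpos : 0 < G := by linarith
  -- a ball with uniformly negative Hessian
  obtain ⟨δ, hδpos, hδ⟩ := Metric.uniformContinuous_iff.1 huch a ha
  set r : ℝ := δ/2 with hrdef
  have hr : 0 < r := by rw [hrdef]; linarith
  have hneg : ∀ z ∈ closedBall xstar r, ∀ v : Euc d, ⟪hess f z v, v⟫ ≤ -a * ‖v‖ ^ 2 := by
    intro z hz v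
    have hdist : dist z xstar < δ := lt_of_le_of_lt (mem_closedBall.1 hz) (by rw [hrdef]; linarith)
    have hH := hδ hdist
    rw [dist_eq_norm] at hH
    have h1 : ⟪hess f z v, v⟫ = ⟪hess f xstar v, v⟫ + ⟪(hess f z - hess f xstar) v, v⟫ := by
      rw [ContinuousLinearMap.sub_apply, inner_sub_left]
      ring
    have h2 : ⟪(hess f z - hess f xstar) v, v⟫ ≤ a * ‖v‖^2 := by
      calc ⟪(hess f z - hess f xstar) v, v⟫
          ≤ ‖(hess f z - hess f xstar) v‖ * ‖v‖ := real_inner_le_norm _ _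
        _ ≤ (‖hess f z - hess f xstar‖ * ‖v‖) * ‖v‖ := by
            gcongr
            exact (hess f z - hess f xstar).le_opNorm v
        _ ≤ (a * ‖v‖) * ‖v‖ := by
            gcongr
        _ = a * ‖v‖^2 := by ring
    have h3 := hBneg v
    rw [h1]
    nlinarith [sq_nonneg ‖v‖]
  set ρ : ℝ := r/2 * Real.sqrt (a / (2*L)) with hρdef
  have hρpos : 0 < ρ := by
    rw [hρdef]
    apply mul_pos (by linarith)
    apply Real.sqrt_pos.2
    positivity
  by_cases hmem : x₀ ∈ closedBall xstar ρ
  · refine ⟨r/2, by linarith, ?_⟩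
    intro ε hε hεle x hseq
    obtain ⟨hx0, hstep⟩ := hseq
    have hK : x 0 ∈ closedBall xstar ρ := by rw [hx0]; exact hmem
    exact phase2 hdiff hgrad hb ha hr haL hneg hg0 hε hεle hstep hK
  · have hx₀ne : x₀ ≠ xstar := by
      intro h
      exact hmem (h ▸ mem_closedBall_self hρpos.le)
    obtain ⟨ε₁, hε₁pos, hph1⟩ := phase1 hdiff hgrad hb hG hL hGpos hρpos hγ0 hγ2 hbasin hg0 hx₀ne
    refine ⟨min ε₁ (r/2), by positivity, ?_⟩
    intro ε hε hεle x hseq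
    obtain ⟨hx0, hstep⟩ := hseq
    obtain ⟨K, hK⟩ := hph1 ε hε (le_trans hεle (min_le_left _ _)) x hx0 hstep
    exact phase2 hdiff hgrad hb ha hr haL hneg hg0 hε
      (le_trans hεle (min_le_right _ _)) hstep hK
end

section
/- Let k : [0,∞) → [0,∞) be continuous, nonincreasing and integrable, set K(x) = k(‖x‖²) for x ∈ ℝ^d, fix c > 0, define l(u) = c·∫_u^∞ k(v) dv and L(x) = l(‖x‖²), and for h > 0 set K_h(x) = h^{−d}K(x/h) and L_h(x) = h^{−d}L(x/h). Then for every x at which (K_h ∗ f)(x) > 0, the mean shift MS_h(x) := (∫ K_h(y − x)(y − x) f(y) dy)/(∫ K_h(y − x) f(y) dy) satisfies MS_h(x) = (h²/(2c)) · ∇(L_h ∗ f)(x) / (K_h ∗ f)(x), where ∗ denotes convolution on ℝ^d. -/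
open Metric Set Filter MeasureTheory Topology
open scoped Topology RealInnerProductSpace

/-- The rescaled radial kernel `x ↦ h^{-d} k(‖x/h‖²)` built from a profile `k : ℝ → ℝ`. -/
noncomputable def radialKernel {d : ℕ} (k : ℝ → ℝ) (h : ℝ) (x : Euc d) : ℝ :=
  (h ^ d)⁻¹ * k (‖h⁻¹ • x‖ ^ 2)

/-- The shadow profile `l(u) = c ∫_u^∞ k(v) dv`. -/
noncomputable def shadowProfile (k : ℝ → ℝ) (c : ℝ) (u : ℝ) : ℝ :=
  c * ∫ v in Ioi u, k v

noncomputable def toDualL (d : ℕ) : Euc d →ₗᵢ[ℝ] StrongDual ℝ (Euc d) where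
  toLinearMap :=
    { toFun := fun v => InnerProductSpace.toDual ℝ (Euc d) v
      map_add' := fun u v => by simp
      map_smul' := fun r v => by simp }
  norm_map' := fun v => by simp

lemma tail_bound (k : ℝ → ℝ) (hk0 : ∀ u ∈ Ici (0:ℝ), 0 ≤ k u)
    (hkm : AntitoneOn k (Ici 0)) (hki : IntegrableOn k (Ici 0) volume)
    {s : ℝ} (hs : 0 ≤ s) : s * k s ≤ 2 * ∫ v in Ici (0:ℝ), k v := by
  have hsub : Ioc (s/2) s ⊆ Ici (0:ℝ) := fun v hv => le_of_lt (lt_of_le_of_lt (by linarith) hv.1)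
  have h1 : (s - s/2) * k s ≤ ∫ v in Ioc (s/2) s, k v := by
    have hc : ∫ v in Ioc (s/2) s, (fun _ => k s) v = (s - s/2) * k s := by
      rw [setIntegral_const, Real.volume_real_Ioc_of_le (by linarith), smul_eq_mul]
    rw [← hc]
    refine setIntegral_mono_on (integrableOn_const measure_Ioc_lt_top.ne)
      (hki.mono_set hsub) measurableSet_Ioc ?_
    exact fun v hv => hkm (hsub hv) hs hv.2
  have h2 : ∫ v in Ioc (s/2) s, k v ≤ ∫ v in Ici (0:ℝ), k v := by
    refine setIntegral_mono_set hki ?_ (HasSubset.Subset.eventuallyLE hsub)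
    exact (ae_restrict_iff' measurableSet_Ici).2 (Filter.Eventually.of_forall hk0)
  nlinarith [hk0 s hs]

set_option maxHeartbeats 2000000 in
/-- The mean shift with kernel `K_h` equals `h²/(2c)` times the gradient of
`L_h ∗ f` divided by `K_h ∗ f`, where `L` is the shadow kernel of `K`. -/
theorem mean_shift_eq_shadow_gradient
    {d : ℕ} (hd : 0 < d) (f : Euc d → ℝ)
    (hf0 : ∀ x, 0 ≤ f x) (hfb : ∃ M, ∀ x, |f x| ≤ M)
    (hfi : Integrable f volume) (hfc : Continuous f)
    (k : ℝ → ℝ) (hk0 : ∀ u ∈ Ici (0:ℝ), 0 ≤ k u)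
    (hkc : ContinuousOn k (Ici 0)) (hkm : AntitoneOn k (Ici 0))
    (hki : IntegrableOn k (Ici 0) volume)
    (c : ℝ) (hc : 0 < c) (h : ℝ) (hh : 0 < h)
    (x : Euc d)
    (hpos : 0 < ∫ y, radialKernel k h (y - x) * f y) :
    (∫ y, radialKernel k h (y - x) * f y)⁻¹ •
        (∫ y, (radialKernel k h (y - x) * f y) • (y - x)) =
      ((h ^ 2 / (2 * c)) / (∫ y, radialKernel k h (y - x) * f y)) •
        gradient (fun z => ∫ y, radialKernel (shadowProfile k c) h (z - y) * f y) x := by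
  have hh' : h ≠ 0 := ne_of_gt hh
  have hhd : (0:ℝ) < (h ^ d)⁻¹ := inv_pos.2 (pow_pos hh d)
  -- extended profile
  set kt : ℝ → ℝ := fun u => k (max u 0) with hkt_def
  have hktc : Continuous kt :=
    hkc.comp_continuous (continuous_id.max continuous_const) (fun u => le_max_right u 0)
  have hkt0 : ∀ u, 0 ≤ kt u := fun u => hk0 _ (le_max_right u 0)
  have hkteq : ∀ u, 0 ≤ u → kt u = k u := fun u hu => by simp [hkt_def, max_eq_left hu]
  set I : ℝ := ∫ v in Ici (0:ℝ), k v with hI_def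
  have hI0 : 0 ≤ I := setIntegral_nonneg measurableSet_Ici hk0
  set I₀ : ℝ := ∫ v in Ioi (0:ℝ), k v with hI₀_def
  have hI₀I : I₀ = I := (integral_Ici_eq_integral_Ioi).symm
  -- extended shadow profile
  set lt : ℝ → ℝ := fun u => c * I₀ - c * ∫ t in (0:ℝ)..u, kt t with hlt_def
  have hlt_deriv : ∀ u, HasDerivAt lt (-(c * kt u)) u := by
    intro u
    have h1 : HasDerivAt (fun u => ∫ t in (0:ℝ)..u, kt t) (kt u) u :=
      intervalIntegral.integral_hasDerivAt_right ((hktc.intervalIntegrable 0 u))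
        (hktc.stronglyMeasurableAtFilter _ _) hktc.continuousAt
    have h2 := (hasDerivAt_const u (c * I₀)).sub (h1.const_mul c)
    rw [zero_sub] at h2
    exact h2
  have hltc : Continuous lt := by
    rw [continuous_iff_continuousAt]; exact fun u => (hlt_deriv u).continuousAt
  have hlt_eq : ∀ u, 0 ≤ u → lt u = shadowProfile k c u := by
    intro u hu
    have hint1 : IntegrableOn k (Ioc 0 u) volume :=
      hki.mono_set (fun v hv => le_of_lt hv.1)
    have hint2 : IntegrableOn k (Ioi u) volume :=
      hki.mono_set (fun v hv => le_trans hu (le_of_lt hv))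
    have hsplit : I₀ = (∫ v in Ioc 0 u, k v) + ∫ v in Ioi u, k v := by
      rw [hI₀_def, ← setIntegral_union (Ioc_disjoint_Ioi le_rfl) measurableSet_Ioi hint1 hint2,
        Ioc_union_Ioi_eq_Ioi hu]
    have hiv : ∫ t in (0:ℝ)..u, kt t = ∫ v in Ioc 0 u, k v := by
      rw [intervalIntegral.integral_of_le hu]
      exact setIntegral_congr_fun measurableSet_Ioc (fun v hv => hkteq v hv.1.le)
    rw [shadowProfile, hlt_def]
    simp only [hiv, hsplit]; ring
  have hlt_nonneg : ∀ u, 0 ≤ u → 0 ≤ lt u := by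
    intro u hu
    rw [hlt_eq u hu, shadowProfile]
    exact mul_nonneg hc.le (setIntegral_nonneg measurableSet_Ioi
      (fun v hv => hk0 v (le_trans hu (le_of_lt hv))))
  have hlt_le : ∀ u, 0 ≤ u → lt u ≤ c * I := by
    intro u hu
    rw [hlt_eq u hu, shadowProfile]
    refine mul_le_mul_of_nonneg_left ?_ hc.le
    refine setIntegral_mono_set hki ((ae_restrict_iff' measurableSet_Ici).2
      (Filter.Eventually.of_forall hk0))
      (HasSubset.Subset.eventuallyLE (fun v hv => le_trans hu (le_of_lt hv)))
  -- basic norm facts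
  have hns : ∀ w : Euc d, ‖h⁻¹ • w‖ = h⁻¹ * ‖w‖ := fun w => by
    rw [norm_smul, Real.norm_eq_abs, abs_of_pos (inv_pos.2 hh)]
  have hK : ∀ w : Euc d, radialKernel k h w = (h ^ d)⁻¹ * kt (‖h⁻¹ • w‖ ^ 2) := fun w => by
    rw [radialKernel, hkteq _ (sq_nonneg _)]
  have hL : ∀ w : Euc d, radialKernel (shadowProfile k c) h w
      = (h ^ d)⁻¹ * lt (‖h⁻¹ • w‖ ^ 2) := fun w => by
    rw [radialKernel, hlt_eq _ (sq_nonneg _)]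
  -- uniform bound on k(‖w/h‖²)‖w‖
  set B : ℝ := h * k 0 + 2 * I * h with hB_def
  have hB : ∀ w : Euc d, k (‖h⁻¹ • w‖ ^ 2) * ‖w‖ ≤ B := by
    intro w
    have ht0 : (0:ℝ) ≤ ‖w‖ := norm_nonneg w
    have harg : ‖h⁻¹ • w‖ ^ 2 = ‖w‖ ^ 2 / h ^ 2 := by
      rw [hns w, mul_pow, inv_pow, inv_mul_eq_div]
    have hargnn : 0 ≤ ‖w‖ ^ 2 / h ^ 2 := div_nonneg (sq_nonneg _) (sq_nonneg _)
    have hk0' : 0 ≤ k 0 := hk0 0 (mem_Ici.2 le_rfl)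
    rcases le_or_gt ‖w‖ h with hth | hth
    · have h1 : k (‖h⁻¹ • w‖ ^ 2) ≤ k 0 := by
        rw [harg]; exact hkm (mem_Ici.2 le_rfl) hargnn hargnn
      have h2 : 0 ≤ k (‖h⁻¹ • w‖ ^ 2) := by rw [harg]; exact hk0 _ hargnn
      nlinarith
    · have hs := tail_bound k hk0 hkm hki hargnn
      rw [harg] at *
      have hknn : 0 ≤ k (‖w‖ ^ 2 / h ^ 2) := hk0 _ hargnn
      have ht : 0 < ‖w‖ := lt_trans hh hth
      -- from (‖w‖²/h²) * k ≤ 2I deduce ‖w‖ * k ≤ 2*I*h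
      have key : ‖w‖ ^ 2 * k (‖w‖ ^ 2 / h ^ 2) ≤ 2 * I * h ^ 2 := by
        have := hs
        rw [div_mul_eq_mul_div, div_le_iff₀ (by positivity)] at this
        linarith [this]
      have h4 : 2 * I * h * h ≤ 2 * I * h * ‖w‖ :=
        mul_le_mul_of_nonneg_left hth.le (by positivity)
      have : ‖w‖ * (‖w‖ * k (‖w‖ ^ 2 / h ^ 2)) ≤ 2 * I * h * ‖w‖ := by
        nlinarith [key, h4]
      have h3 : ‖w‖ * k (‖w‖ ^ 2 / h ^ 2) ≤ 2 * I * h :=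
        le_of_mul_le_mul_left (by linarith [this]) ht
      nlinarith
  -- per-point derivative of the shadow kernel
  have hDer : ∀ (z y : Euc d), HasFDerivAt (fun z => radialKernel (shadowProfile k c) h (z - y))
      (toDualL d ((-(2 * c) / h ^ 2 * radialKernel k h (z - y)) • (z - y))) z := by
    intro z y
    have hg : HasFDerivAt (fun z : Euc d => h⁻¹ • (z - y))
        (h⁻¹ • ContinuousLinearMap.id ℝ (Euc d)) z :=
      ((hasFDerivAt_id z).sub_const y).const_smul h⁻¹
    have hA : HasFDerivAt (fun z : Euc d => ‖h⁻¹ • (z - y)‖ ^ 2)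
        (2 • (innerSL ℝ (h⁻¹ • (z - y))).comp (h⁻¹ • ContinuousLinearMap.id ℝ (Euc d))) z :=
      hg.norm_sq
    have hl := hlt_deriv (‖h⁻¹ • (z - y)‖ ^ 2)
    have hcomp := (hl.comp_hasFDerivAt z hA).const_mul ((h ^ d)⁻¹)
    have hfun : (fun z : Euc d => radialKernel (shadowProfile k c) h (z - y))
        = fun z => (h ^ d)⁻¹ * lt (‖h⁻¹ • (z - y)‖ ^ 2) := funext fun z => hL _
    rw [hfun]
    refine hcomp.congr_fderiv ?_
    ext v
    simp only [toDualL, LinearIsometry.coe_mk, LinearMap.coe_mk, AddHom.coe_mk,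
      InnerProductSpace.toDual_apply_apply, ContinuousLinearMap.smul_apply, ContinuousLinearMap.coe_smul',
      Pi.smul_apply, ContinuousLinearMap.coe_comp', Function.comp_apply,
      ContinuousLinearMap.coe_id', id_eq, smul_eq_mul, real_inner_smul_left,
      real_inner_smul_right, hK, nsmul_eq_mul, Nat.cast_ofNat]
    rw [innerSL_apply_apply, real_inner_smul_left, real_inner_smul_right]
    ring
  -- continuity helpers
  have hargc : ∀ z : Euc d, Continuous fun y : Euc d => ‖h⁻¹ • (z - y)‖ ^ 2 := fun z =>
    ((continuous_const.sub continuous_id).const_smul h⁻¹).norm.pow 2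
  have hKc : ∀ z : Euc d, Continuous fun y => radialKernel k h (z - y) := fun z => by
    simp only [hK]; exact continuous_const.mul (hktc.comp (hargc z))
  have hLc : ∀ z : Euc d, Continuous fun y => radialKernel (shadowProfile k c) h (z - y) :=
    fun z => by
      simp only [hL]; exact continuous_const.mul (hltc.comp (hargc z))
  have hKnn : ∀ w : Euc d, 0 ≤ radialKernel k h w := fun w => by
    rw [hK]; exact mul_nonneg hhd.le (hkt0 _)
  have hKB : ∀ z y : Euc d, radialKernel k h (z - y) * ‖z - y‖ ≤ (h ^ d)⁻¹ * B := by
    intro z y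
    rw [radialKernel, mul_assoc]
    exact mul_le_mul_of_nonneg_left (hB _) hhd.le
  -- the dominating bound
  set bound : Euc d → ℝ := fun y => (2 * c / h ^ 2 * ((h ^ d)⁻¹ * B)) * f y with hbound_def
  have hbound_int : Integrable bound volume := hfi.const_mul _
  -- derivative fields
  set F' : Euc d → Euc d → (Euc d →L[ℝ] ℝ) := fun z y =>
    toDualL d ((f y * (-(2 * c) / h ^ 2 * radialKernel k h (z - y))) • (z - y)) with hF'_def
  have h_diff : ∀ y : Euc d, ∀ z ∈ ball x 1,
      HasFDerivAt (fun z => radialKernel (shadowProfile k c) h (z - y) * f y) (F' z y) z := by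
    intro y z _
    simpa only [hF'_def, ← smul_smul, (toDualL d).map_smul] using (hDer z y).mul_const (f y)
  have h_bound : ∀ y : Euc d, ∀ z ∈ ball x 1, ‖F' z y‖ ≤ bound y := by
    intro y z _
    rw [hF'_def]
    rw [(toDualL d).norm_map, norm_smul]
    have hKnn' := hKnn (z - y)
    have habs : ‖f y * (-(2 * c) / h ^ 2 * radialKernel k h (z - y))‖
        = f y * (2 * c / h ^ 2 * radialKernel k h (z - y)) := by
      rw [Real.norm_eq_abs, abs_mul, abs_of_nonneg (hf0 y), abs_mul, abs_div, abs_neg,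
        abs_of_nonneg (by positivity : (0:ℝ) ≤ 2 * c), abs_of_pos (pow_pos hh 2),
        abs_of_nonneg hKnn']
    rw [habs]
    calc f y * (2 * c / h ^ 2 * radialKernel k h (z - y)) * ‖z - y‖
        = (2 * c / h ^ 2 * f y) * (radialKernel k h (z - y) * ‖z - y‖) := by ring
      _ ≤ (2 * c / h ^ 2 * f y) * ((h ^ d)⁻¹ * B) :=
          mul_le_mul_of_nonneg_left (hKB z y) (mul_nonneg (by positivity) (hf0 y))
      _ = bound y := by rw [hbound_def]; ring
  have hF_meas : ∀ᶠ z in 𝓝 x, AEStronglyMeasurable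
      (fun y => radialKernel (shadowProfile k c) h (z - y) * f y) volume :=
    Filter.Eventually.of_forall fun z => ((hLc z).mul hfc).aestronglyMeasurable
  have hF_int : Integrable (fun y => radialKernel (shadowProfile k c) h (x - y) * f y) volume := by
    refine Integrable.mono' (hfi.const_mul ((h ^ d)⁻¹ * (c * I)))
      ((hLc x).mul hfc).aestronglyMeasurable (Filter.Eventually.of_forall fun y => ?_)
    have h1 : 0 ≤ radialKernel (shadowProfile k c) h (x - y) := by
      rw [hL]; exact mul_nonneg hhd.le (hlt_nonneg _ (sq_nonneg _))
    have h2 : radialKernel (shadowProfile k c) h (x - y) ≤ (h ^ d)⁻¹ * (c * I) := by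
      rw [hL]; exact mul_le_mul_of_nonneg_left (hlt_le _ (sq_nonneg _)) hhd.le
    rw [Real.norm_eq_abs, abs_mul, abs_of_nonneg h1, abs_of_nonneg (hf0 y)]
    exact mul_le_mul_of_nonneg_right h2 (hf0 y)
  have hF'_meas : AEStronglyMeasurable (F' x) volume := by
    rw [hF'_def]
    exact ((toDualL d).continuous.comp
      ((hfc.mul (continuous_const.mul (hKc x))).smul
        (continuous_const.sub continuous_id))).aestronglyMeasurable
  have key := hasFDerivAt_integral_of_dominated_of_fderiv_le (μ := volume) (ball_mem_nhds x one_pos)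
    hF_meas hF_int hF'_meas (ae_of_all _ h_bound) hbound_int (ae_of_all _ h_diff)
  -- rewrite the derivative as a gradient
  set g : Euc d → Euc d := fun y =>
    (f y * (-(2 * c) / h ^ 2 * radialKernel k h (x - y))) • (x - y) with hg_def
  have hcomm : (∫ y, F' x y) = toDualL d (∫ y, g y) := (toDualL d).integral_comp_comm g
  have hgeq : g = fun y => (2 * c / h ^ 2) • ((radialKernel k h (y - x) * f y) • (y - x)) := by
    funext y
    have hsym : ∀ w : Euc d, radialKernel k h (-w) = radialKernel k h w := fun w => by
      rw [radialKernel, radialKernel, smul_neg, norm_neg]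
    rw [hg_def]
    simp only [← neg_sub y x, smul_neg, ← neg_smul, smul_smul, hsym]
    congr 1
    ring
  have hVint : (∫ y, g y) = (2 * c / h ^ 2) •
      (∫ y, (radialKernel k h (y - x) * f y) • (y - x)) := by
    rw [hgeq, integral_smul]
  have hgrad : gradient (fun z => ∫ y, radialKernel (shadowProfile k c) h (z - y) * f y) x
      = (2 * c / h ^ 2) • (∫ y, (radialKernel k h (y - x) * f y) • (y - x)) := by
    have hg2 : HasGradientAt (fun z => ∫ y, radialKernel (shadowProfile k c) h (z - y) * f y)
        ((2 * c / h ^ 2) • (∫ y, (radialKernel k h (y - x) * f y) • (y - x))) x := by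
      rw [hcomm, hVint] at key
      exact key
    exact hg2.gradient
  rw [hgrad, smul_smul]
  have ha : (∫ y, radialKernel k h (y - x) * f y) ≠ 0 := ne_of_gt hpos
  congr 1
  field_simp
end
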